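/- arXiv:1607.04692 — 2 statements merged into one kernel-verified Lean document; each statement's English description precedes it below -/
import Mathlib

section
/- Let {H_n} be a Positive Linear Recurrence Sequence with length L and size S. Suppose E[K_r] = a·r + b + f(r) for all r > L, where a > 0, b are constants and f(r) → 0 as r → ∞. Define Y_n(ω) = Z_n(ω) + f(n − L_n(ω)) − a·L_n(ω) for n > 2L. Then there exists N > 2L such that for all n > N, Var[Y_n] > a²/(2S). -/
open scoped BigOperators
open Filter

/-- A Positive Linear Recurrence Sequence (PLRS): a sequence `H` of positive integers
satisfying `H (n+1) = c 1 * H n + ⋯ + c L * H (n+1-L)` for `n ≥ L`, with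
`H 1 = 1` and initial conditions `H (n+1) = c 1 * H n + ⋯ + c n * H 1 + 1` for `1 ≤ n < L`. -/
structure PLRS where
  /-- the length of the recurrence -/
  L : ℕ
  /-- the coefficients of the recurrence (indexed from 1) -/
  c : ℕ → ℕ
  /-- the sequence itself (indexed from 1) -/
  H : ℕ → ℕ
  L_pos : 0 < L
  c1_pos : 0 < c 1
  cL_pos : 0 < c L
  H_pos : ∀ n, 1 ≤ n → 0 < H n
  H_one : H 1 = 1
  H_rec : ∀ n, L ≤ n → H (n + 1) = ∑ i ∈ Finset.Icc 1 L, c i * H (n + 1 - i)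
  H_init : ∀ n, 1 ≤ n → n < L → H (n + 1) = (∑ i ∈ Finset.Icc 1 n, c i * H (n + 1 - i)) + 1

namespace PLRS

/-- The size `S = c 1 + ⋯ + c L` of a PLRS. -/
def size (P : PLRS) : ℕ := ∑ i ∈ Finset.Icc 1 P.L, P.c i

/-- Legality of a coefficient sequence `(a_1, …, a_m)` (as a list), not including the
requirement `a_1 > 0`: either (Condition 1) `m < L` and `a_i = c_i` for all `i`, or
(Condition 2) there is `s ∈ {1, …, L}` with `a_1 = c_1, …, a_{s-1} = c_{s-1}`, `a_s < c_s`,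
and `(a_{s+1}, …, a_m)` legal (possibly empty). -/
inductive IsLegal (P : PLRS) : List ℕ → Prop
  | cond1 (m : ℕ) (h1 : 1 ≤ m) (h2 : m < P.L) :
      IsLegal P ((List.range m).map fun i => P.c (i + 1))
  | cond2 (s : ℕ) (hs1 : 1 ≤ s) (hs2 : s ≤ P.L) (a : ℕ) (ha : a < P.c s)
      (rest : List ℕ) (hrest : IsLegal P rest) :
      IsLegal P (((List.range (s - 1)).map fun i => P.c (i + 1)) ++ a :: rest)
  | cond2_last (s : ℕ) (hs1 : 1 ≤ s) (hs2 : s ≤ P.L) (a : ℕ) (ha : a < P.c s) :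
      IsLegal P (((List.range (s - 1)).map fun i => P.c (i + 1)) ++ [a])

/-- A legal decomposition: a legal coefficient sequence with `a_1 > 0`. -/
def LegalDecomp (P : PLRS) (l : List ℕ) : Prop := P.IsLegal l ∧ 0 < l.headI

/-- The value `∑_{i=1}^m a_i H_{m+1-i}` of a coefficient sequence `(a_1, …, a_m)`. -/
def value (P : PLRS) (l : List ℕ) : ℕ :=
  ∑ i ∈ Finset.range l.length, l.getD i 0 * P.H (l.length - i)

/-- `Ω_n`: the set of legal decompositions of integers in `[H_n, H_{n+1})`. -/
def Omega (P : PLRS) (n : ℕ) : Set (List ℕ) :=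
  {l | P.LegalDecomp l ∧ P.H n ≤ P.value l ∧ P.value l < P.H (n + 1)}

/-- Expectation of `g` under the uniform probability measure on a (finite) set `A`. -/
noncomputable def expectOn (A : Set (List ℕ)) (g : List ℕ → ℝ) : ℝ :=
  (∑ᶠ l ∈ A, g l) / (A.ncard : ℝ)

/-- Variance of `g` under the uniform probability measure on a (finite) set `A`. -/
noncomputable def varOn (A : Set (List ℕ)) (g : List ℕ → ℝ) : ℝ :=
  expectOn A (fun l => g l ^ 2) - (expectOn A g) ^ 2

/-- Expectation of `g` under the uniform probability measure on `Ω_n`. -/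
noncomputable def expect (P : PLRS) (n : ℕ) (g : List ℕ → ℝ) : ℝ := expectOn (P.Omega n) g

/-- Probability of the event `A` under the uniform probability measure on `Ω_n`. -/
noncomputable def prob (P : PLRS) (n : ℕ) (A : Set (List ℕ)) : ℝ :=
  ((P.Omega n ∩ A).ncard : ℝ) / ((P.Omega n).ncard : ℝ)

/-- `E[K_n]`, the expected number of summands on `Ω_n`. -/
noncomputable def expectK (P : PLRS) (n : ℕ) : ℝ := P.expect n fun l => (l.sum : ℝ)

/-- `Var[K_n]`, the variance of the number of summands on `Ω_n`. -/
noncomputable def varK (P : PLRS) (n : ℕ) : ℝ := varOn (P.Omega n) fun l => (l.sum : ℝ)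

/-- The first index (0-based) at which the coefficient list disagrees with `c`. -/
def firstMismatch (P : PLRS) (l : List ℕ) : Option ℕ :=
  (List.range l.length).find? fun i => l.getD i 0 != P.c (i + 1)

/-- The block decomposition of a legal coefficient sequence: repeatedly split off the
Type 2 block `(c_1, …, c_{s-1}, a_s)` with `a_s ≠ c_s`; if the whole remaining sequence
agrees with `c` it is a single (Type 1) block. -/
def blocks (P : PLRS) (l : List ℕ) : List (List ℕ) :=
  if h : l = [] then []
  else
    match P.firstMismatch l with
    | none => [l]
    | some i => l.take (i + 1) :: P.blocks (l.drop (i + 1))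
termination_by l.length
decreasing_by
  have hl : 0 < l.length := List.length_pos_iff.mpr h
  simp only [List.length_drop]
  omega

/-- The second-to-last block of a legal decomposition. -/
def stlBlock (P : PLRS) (l : List ℕ) : List ℕ := ((P.blocks l).reverse).getD 1 []

/-- `Z_n(ω)`: the size (sum of coefficients) of the second-to-last block. -/
def Z (P : PLRS) (l : List ℕ) : ℕ := (P.stlBlock l).sum

/-- The length function `ℓ(t)`: the length of the Type 2 block of size `t`, i.e., the least
`s` with `t < c_1 + ⋯ + c_s`. -/
noncomputable def ell (P : PLRS) (t : ℕ) : ℕ :=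
  sInf {s : ℕ | t < ∑ i ∈ Finset.Icc 1 s, P.c i}

/-- `L_n(ω) = ℓ(Z_n(ω))`: the length of the second-to-last block. -/
noncomputable def Lfn (P : PLRS) (l : List ℕ) : ℕ := P.ell (P.Z l)

/-- `h_t`: remove the second-to-last block of a legal decomposition. -/
def removeSTL (P : PLRS) (l : List ℕ) : List ℕ :=
  ((((P.blocks l).reverse).eraseIdx 1).reverse).flatten

/-- The Type 2 block of size `t`: `(c_1, …, c_{ℓ(t)-1}, t - (c_1 + ⋯ + c_{ℓ(t)-1}))`. -/
noncomputable def type2Block (P : PLRS) (t : ℕ) : List ℕ :=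
  ((List.range (P.ell t - 1)).map fun i => P.c (i + 1)) ++
    [t - ∑ i ∈ Finset.Icc 1 (P.ell t - 1), P.c i]

/-- Insert the Type 2 block of size `t` immediately before the last block. -/
noncomputable def insertSTL (P : PLRS) (t : ℕ) (l : List ℕ) : List ℕ :=
  ((((P.blocks l).reverse).insertIdx 1 (P.type2Block t)).reverse).flatten

/-- A Type 1 block: `(c_1, …, c_m)` with `1 ≤ m < L`. -/
def IsType1Block (P : PLRS) (bl : List ℕ) : Prop :=
  ∃ m, 1 ≤ m ∧ m < P.L ∧ bl = (List.range m).map fun i => P.c (i + 1)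

/-- A Type 2 block: `(c_1, …, c_{s-1}, a)` with `1 ≤ s ≤ L` and `a < c_s`. -/
def IsType2Block (P : PLRS) (bl : List ℕ) : Prop :=
  ∃ s, 1 ≤ s ∧ s ≤ P.L ∧ ∃ a, a < P.c s ∧
    bl = ((List.range (s - 1)).map fun i => P.c (i + 1)) ++ [a]

/-- Conditional expectation of `g` on `Ω_n` given `Z_n = t`. -/
noncomputable def condExpect (P : PLRS) (n t : ℕ) (g : List ℕ → ℝ) : ℝ :=
  expectOn (P.Omega n ∩ {l | P.Z l = t}) g

end PLRS

namespace PLRS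

variable (P : PLRS)

/-- prefix list `(c 1, …, c s)` -/
def pre (s : ℕ) : List ℕ := (List.range s).map fun i => P.c (i + 1)

/-- partial sum `c 1 + ⋯ + c s` -/
def sig (s : ℕ) : ℕ := ∑ i ∈ Finset.Icc 1 s, P.c i

lemma pre_def (s : ℕ) : ((List.range s).map fun i => P.c (i + 1)) = P.pre s := rfl

@[simp] lemma pre_length (s : ℕ) : (P.pre s).length = s := by
  simp [pre]

@[simp] lemma sig_zero : P.sig 0 = 0 := by simp [sig]

lemma sig_succ (s : ℕ) : P.sig (s + 1) = P.sig s + P.c (s + 1) := by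
  simp [sig, Finset.sum_Icc_succ_top (Nat.one_le_iff_ne_zero.mpr (by omega))]

lemma sig_mono : Monotone P.sig := by
  intro i j hij
  exact Finset.sum_le_sum_of_subset (Finset.Icc_subset_Icc le_rfl hij)

lemma size_eq_sig : P.size = P.sig P.L := rfl

lemma one_le_size : 1 ≤ P.size := by
  calc 1 ≤ P.c 1 := P.c1_pos
  _ ≤ P.size := Finset.single_le_sum (f := fun i => P.c i) (fun i _ => Nat.zero_le _)
      (Finset.mem_Icc.mpr ⟨le_rfl, P.L_pos⟩)

lemma c_le_size (i : ℕ) (h1 : 1 ≤ i) (h2 : i ≤ P.L) : P.c i ≤ P.size := by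
  exact Finset.single_le_sum (f := fun i => P.c i) (fun i _ => Nat.zero_le _)
      (Finset.mem_Icc.mpr ⟨h1, h2⟩)

lemma pre_getD (s i : ℕ) (h : i < s) : (P.pre s).getD i 0 = P.c (i + 1) := by
  rw [List.getD_eq_getElem _ _ (by simpa using h)]
  simp [pre]

lemma pre_succ (s : ℕ) : P.pre (s + 1) = P.pre s ++ [P.c (s + 1)] := by
  simp [pre, List.range_succ]

lemma pre_sum (s : ℕ) : (P.pre s).sum = P.sig s := by
  induction s with
  | zero => simp [pre]
  | succ k ih => rw [P.pre_succ, P.sig_succ, List.sum_append, ih]; simp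

lemma headI_pre_cons (k a : ℕ) (x : List ℕ) :
    (P.pre k ++ a :: x).headI = if k = 0 then a else P.c 1 := by
  cases k with
  | zero => simp [pre]
  | succ m => simp [pre, List.range_succ_eq_map]

/-! ### H lemmas -/

lemma H_lt_succ (hnd : 2 ≤ P.c 1 ∨ 2 ≤ P.L) (m : ℕ) (hm : 1 ≤ m) :
    P.H m < P.H (m + 1) := by
  have hHm : 1 ≤ P.H m := P.H_pos m hm
  rcases lt_or_ge m P.L with hmL | hmL
  · -- initial segment
    rw [P.H_init m hm hmL]
    have h1 : P.c 1 * P.H (m + 1 - 1) ≤ ∑ i ∈ Finset.Icc 1 m, P.c i * P.H (m + 1 - i) :=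
      Finset.single_le_sum (f := fun i => P.c i * P.H (m + 1 - i))
        (fun i _ => Nat.zero_le _) (Finset.mem_Icc.mpr ⟨le_rfl, hm⟩)
    have : P.H m ≤ P.c 1 * P.H (m + 1 - 1) := by
      have := P.c1_pos
      calc P.H m = 1 * P.H m := (one_mul _).symm
      _ ≤ P.c 1 * P.H (m + 1 - 1) := by
          simp only [Nat.add_sub_cancel]
          exact Nat.mul_le_mul P.c1_pos le_rfl
    omega
  · rw [P.H_rec m hmL]
    rcases hnd with hc1 | hL2
    · have h1 : P.c 1 * P.H (m + 1 - 1) ≤ ∑ i ∈ Finset.Icc 1 P.L, P.c i * P.H (m + 1 - i) :=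
        Finset.single_le_sum (f := fun i => P.c i * P.H (m + 1 - i))
          (fun i _ => Nat.zero_le _) (Finset.mem_Icc.mpr ⟨le_rfl, P.L_pos⟩)
      have : 2 * P.H m ≤ P.c 1 * P.H (m + 1 - 1) := by
        simp only [Nat.add_sub_cancel]
        exact Nat.mul_le_mul hc1 le_rfl
      omega
    · have hsub : ({1, P.L} : Finset ℕ) ⊆ Finset.Icc 1 P.L := by
        intro x hx
        simp only [Finset.mem_insert, Finset.mem_singleton] at hx
        rcases hx with rfl | rfl
        · exact Finset.mem_Icc.mpr ⟨le_rfl, P.L_pos⟩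
        · exact Finset.mem_Icc.mpr ⟨P.L_pos, le_rfl⟩
      have h1 : ∑ i ∈ ({1, P.L} : Finset ℕ), P.c i * P.H (m + 1 - i) ≤
          ∑ i ∈ Finset.Icc 1 P.L, P.c i * P.H (m + 1 - i) :=
        Finset.sum_le_sum_of_subset hsub
      rw [Finset.sum_pair (by omega)] at h1
      have hL1 : P.H m ≤ P.c 1 * P.H (m + 1 - 1) := by
        simp only [Nat.add_sub_cancel]
        calc P.H m = 1 * P.H m := (one_mul _).symm
        _ ≤ P.c 1 * P.H m := Nat.mul_le_mul P.c1_pos le_rfl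
      have hLL : 1 ≤ P.c P.L * P.H (m + 1 - P.L) := by
        have : 1 ≤ P.H (m + 1 - P.L) := P.H_pos _ (by omega)
        have h2 := P.cL_pos
        exact Nat.one_le_iff_ne_zero.mpr (Nat.mul_ne_zero (by omega) (by omega))
      omega

lemma H_le_H (hnd : 2 ≤ P.c 1 ∨ 2 ≤ P.L) (m m' : ℕ) (hm : 1 ≤ m) (hmm : m ≤ m') :
    P.H m ≤ P.H m' := by
  induction m' with
  | zero => omega
  | succ k ih =>
    rcases Nat.lt_or_ge m (k+1) with h | h
    · have h1 : m ≤ k := by omega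
      have := ih h1
      rcases Nat.eq_zero_or_pos k with rfl | hk
      · omega
      · exact le_trans this (le_of_lt (P.H_lt_succ hnd k hk))
    · have : m = k + 1 := by omega
      subst this; rfl

/-! ### firstMismatch and blocks -/

lemma find?_range_eq_some (p : ℕ → Bool) (m i : ℕ) (hi : i < m)
    (h1 : ∀ j < i, ¬ p j) (h2 : p i) : (List.range m).find? p = some i := by
  induction m with
  | zero => omega
  | succ k ih =>
    rw [List.range_succ, List.find?_append]
    rcases Nat.lt_or_ge i k with h | h
    · rw [ih h]; rfl
    · have : i = k := by omega
      subst this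
      have hnone : (List.range i).find? p = none :=
        List.find?_eq_none.mpr (fun x hx => by simp only [List.mem_range] at hx; simpa using h1 x hx)
      rw [hnone]
      simp [List.find?, h2]

lemma fm_eq_none (l : List ℕ) (h : ∀ i < l.length, l.getD i 0 = P.c (i + 1)) :
    P.firstMismatch l = none := by
  refine List.find?_eq_none.mpr (fun x hx => ?_)
  simp only [List.mem_range] at hx
  simp only [bne_iff_ne, ne_eq, Decidable.not_not]
  exact h x hx

lemma fm_eq_some (l : List ℕ) (i : ℕ) (hi : i < l.length)
    (hlt : ∀ j < i, l.getD j 0 = P.c (j + 1)) (hne : l.getD i 0 ≠ P.c (i + 1)) :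
    P.firstMismatch l = some i := by
  refine find?_range_eq_some _ _ _ hi (fun j hj => ?_) ?_
  · simp only [bne_iff_ne, ne_eq, Decidable.not_not]
    exact hlt j hj
  · simp only [bne_iff_ne, ne_eq]
    exact hne

@[simp] lemma blocks_nil : P.blocks [] = [] := by
  rw [blocks]
  simp

lemma blocks_of_none (l : List ℕ) (h : l ≠ []) (hm : P.firstMismatch l = none) :
    P.blocks l = [l] := by
  rw [blocks]
  simp [h, hm]

lemma blocks_of_some (l : List ℕ) (i : ℕ) (hm : P.firstMismatch l = some i) :
    P.blocks l = l.take (i + 1) :: P.blocks (l.drop (i + 1)) := by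
  have hne : l ≠ [] := by
    intro h; subst h
    rw [show P.firstMismatch [] = none from List.find?_eq_none.mpr (by simp)] at hm
    cases hm
  rw [blocks]
  simp [hne, hm]

lemma blocks_pre (m : ℕ) (hm : 1 ≤ m) : P.blocks (P.pre m) = [P.pre m] := by
  have hne : P.pre m ≠ [] := by
    intro h
    have := congrArg List.length h
    simp at this; omega
  exact P.blocks_of_none _ hne (P.fm_eq_none _ (fun i hi => P.pre_getD m i (by simpa using hi)))

lemma blocks_blk (s a : ℕ) (r : List ℕ) (h1 : 1 ≤ s) (hne : a ≠ P.c s) :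
    P.blocks (P.pre (s - 1) ++ a :: r) = (P.pre (s - 1) ++ [a]) :: P.blocks r := by
  have hlen : (P.pre (s-1) ++ a :: r).length = s + r.length := by
    simp; omega
  have hfm : P.firstMismatch (P.pre (s-1) ++ a :: r) = some (s - 1) := by
    refine P.fm_eq_some _ (s-1) (by omega) (fun j hj => ?_) ?_
    · rw [List.getD_append _ _ _ _ (by simp; omega)]
      exact P.pre_getD _ j hj
    · rw [List.getD_append_right _ _ _ _ (by simp)]
      simpa [show s - 1 + 1 = s by omega] using hne
  rw [P.blocks_of_some _ _ hfm]
  have ht : (P.pre (s-1) ++ a :: r).take (s - 1 + 1) = P.pre (s-1) ++ [a] := by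
    rw [List.take_append]
    simp [List.take_of_length_le (le_of_eq (P.pre_length (s-1)))]
  have hd : (P.pre (s-1) ++ a :: r).drop (s - 1 + 1) = r := by
    rw [List.drop_append]
    simp
  rw [ht, hd]

/-! ### structure of legal lists -/

lemma legal_ne_nil {l : List ℕ} (h : P.IsLegal l) : l ≠ [] := by
  cases h with
  | cond1 m h1 h2 =>
    intro he
    have := congrArg List.length he
    simp at this; omega
  | cond2 s hs1 hs2 a ha rest hrest =>
    intro he
    have := congrArg List.length he
    simp at this
  | cond2_last s hs1 hs2 a ha =>
    intro he
    have := congrArg List.length he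
    simp at this

lemma legal_blocks_ne_nil {l : List ℕ} (h : P.IsLegal l) : P.blocks l ≠ [] := by
  cases h with
  | cond1 m h1 h2 =>
    rw [pre_def, P.blocks_pre m h1]
    simp
  | cond2 s hs1 hs2 a ha rest hrest =>
    rw [pre_def, P.blocks_blk s a rest hs1 (ne_of_lt ha)]
    simp
  | cond2_last s hs1 hs2 a ha =>
    rw [pre_def, P.blocks_blk s a [] hs1 (ne_of_lt ha)]
    simp

lemma legal_flatten_blocks {l : List ℕ} (h : P.IsLegal l) : (P.blocks l).flatten = l := by
  induction h with
  | cond1 m h1 h2 =>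
    rw [pre_def, P.blocks_pre m h1]
    simp
  | cond2 s hs1 hs2 a ha rest hrest ih =>
    rw [pre_def, P.blocks_blk s a rest hs1 (ne_of_lt ha)]
    simp only [List.flatten_cons, ih]
    simp
  | cond2_last s hs1 hs2 a ha =>
    rw [pre_def, P.blocks_blk s a [] hs1 (ne_of_lt ha)]
    simp

lemma legal_entry_le {l : List ℕ} (h : P.IsLegal l) : ∀ x ∈ l, x ≤ P.size := by
  induction h with
  | cond1 m h1 h2 =>
    intro x hx
    simp only [List.mem_map, List.mem_range] at hx
    obtain ⟨i, hi, rfl⟩ := hx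
    exact P.c_le_size (i+1) (by omega) (by omega)
  | cond2 s hs1 hs2 a ha rest hrest ih =>
    intro x hx
    simp only [List.mem_append, List.mem_cons, List.mem_map, List.mem_range] at hx
    rcases hx with (⟨i, hi, rfl⟩ | rfl | hx)
    · exact P.c_le_size (i+1) (by omega) (by omega)
    · exact le_trans (le_of_lt ha) (P.c_le_size s hs1 hs2)
    · exact ih x hx
  | cond2_last s hs1 hs2 a ha =>
    intro x hx
    simp only [List.mem_append, List.mem_cons, List.mem_map, List.mem_range,
      List.mem_singleton] at hx
    rcases hx with (⟨i, hi, rfl⟩ | hx2)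
    · exact P.c_le_size (i+1) (by omega) (by omega)
    · have : x = a := by simpa using hx2
      subst this
      exact le_trans (le_of_lt ha) (P.c_le_size s hs1 hs2)

lemma legal_length_le {l : List ℕ} (h : P.IsLegal l) :
    l.length ≤ P.L * (P.blocks l).length := by
  induction h with
  | cond1 m h1 h2 =>
    rw [pre_def, P.blocks_pre m h1]
    simp [pre]
    omega
  | cond2 s hs1 hs2 a ha rest hrest ih =>
    rw [pre_def, P.blocks_blk s a rest hs1 (ne_of_lt ha)]
    simp only [List.length_append, List.length_cons, List.length_map, List.length_range,
      pre_length]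
    rw [Nat.mul_succ]
    omega
  | cond2_last s hs1 hs2 a ha =>
    rw [pre_def, P.blocks_blk s a [] hs1 (ne_of_lt ha)]
    simp
    omega

lemma legal_of_long {l : List ℕ} (h : P.IsLegal l) (hl : P.L < l.length) :
    ∃ s a r, 1 ≤ s ∧ s ≤ P.L ∧ a < P.c s ∧ P.IsLegal r ∧
      l = P.pre (s - 1) ++ a :: r := by
  cases h with
  | cond1 m h1 h2 =>
    exfalso
    simp at hl
    omega
  | cond2 s hs1 hs2 a ha rest hrest =>
    exact ⟨s, a, rest, hs1, hs2, ha, hrest, rfl⟩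
  | cond2_last s hs1 hs2 a ha =>
    exfalso
    simp at hl
    omega

/-! ### value lemmas -/

lemma sum_Icc_shift (g : ℕ → ℕ) (m : ℕ) :
    ∑ j ∈ Finset.Icc 1 m, g j = ∑ i ∈ Finset.range m, g (i + 1) := by
  rw [← Finset.Ico_add_one_right_eq_Icc, Finset.sum_Ico_eq_sum_range]
  refine Finset.sum_congr (by norm_num) (fun i _ => by rw [Nat.add_comm])

lemma T_le (s len : ℕ) (hs1 : 1 ≤ s) (hs2 : s ≤ P.L) (hslen : s ≤ len) (h1len : 1 ≤ len) :
    ∑ i ∈ Finset.range s, P.c (i + 1) * P.H (len - i) ≤ P.H (len + 1) := by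
  have he : ∑ i ∈ Finset.range s, P.c (i + 1) * P.H (len - i) =
      ∑ j ∈ Finset.Icc 1 s, P.c j * P.H (len + 1 - j) := by
    rw [sum_Icc_shift (fun j => P.c j * P.H (len + 1 - j)) s]
    exact Finset.sum_congr rfl (fun i _ => by
      congr 1
      congr 1
      omega)
  rw [he]
  rcases le_or_gt P.L len with h | h
  · rw [P.H_rec len h]
    exact Finset.sum_le_sum_of_subset (Finset.Icc_subset_Icc le_rfl hs2)
  · rw [P.H_init len h1len h]
    have hsub : Finset.Icc 1 s ⊆ Finset.Icc 1 len := Finset.Icc_subset_Icc le_rfl hslen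
    have h2 : ∑ j ∈ Finset.Icc 1 s, P.c j * P.H (len + 1 - j) ≤
        ∑ j ∈ Finset.Icc 1 len, P.c j * P.H (len + 1 - j) :=
      Finset.sum_le_sum_of_subset hsub
    omega

lemma value_cons (a : ℕ) (y : List ℕ) :
    P.value (a :: y) = a * P.H (y.length + 1) + P.value y := by
  unfold value
  rw [List.length_cons, Finset.sum_range_succ']
  have h1 : ∑ i ∈ Finset.range y.length,
      (a :: y).getD (i + 1) 0 * P.H (y.length + 1 - (i + 1)) =
      ∑ i ∈ Finset.range y.length, y.getD i 0 * P.H (y.length - i) := by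
    refine Finset.sum_congr rfl (fun i _ => ?_)
    simp only [List.getD_cons_succ]
    congr 2
    omega
  rw [h1]
  simp only [List.getD_cons_zero, Nat.sub_zero]
  exact Nat.add_comm _ _

lemma value_append (x y : List ℕ) :
    P.value (x ++ y) =
      (∑ i ∈ Finset.range x.length, x.getD i 0 * P.H (x.length + y.length - i)) + P.value y := by
  induction x with
  | nil => simp
  | cons hd tl ih =>
    rw [List.cons_append, P.value_cons, ih]
    rw [List.length_cons, Finset.sum_range_succ']
    have h1 : ∑ i ∈ Finset.range tl.length,
        (hd :: tl).getD (i + 1) 0 * P.H (tl.length + 1 + y.length - (i + 1)) =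
        ∑ i ∈ Finset.range tl.length, tl.getD i 0 * P.H (tl.length + y.length - i) := by
      refine Finset.sum_congr rfl (fun i _ => ?_)
      simp only [List.getD_cons_succ]
      congr 2
      omega
    rw [h1]
    simp only [List.getD_cons_zero, Nat.sub_zero]
    rw [List.length_append]
    have h3 : tl.length + 1 + y.length = tl.length + y.length + 1 := by omega
    rw [h3]
    ring

lemma value_lt {l : List ℕ} (h : P.IsLegal l) : P.value l < P.H (l.length + 1) := by
  induction h with
  | cond1 m h1 h2 =>
    rw [pre_def]
    have hv : P.value (P.pre m) = ∑ i ∈ Finset.range m, P.c (i + 1) * P.H (m - i) := by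
      unfold value
      rw [P.pre_length]
      exact Finset.sum_congr rfl (fun i hi => by
        rw [P.pre_getD m i (by simpa using hi)])
    have hint := P.H_init m h1 h2
    rw [sum_Icc_shift (fun j => P.c j * P.H (m + 1 - j)) m] at hint
    have he2 : ∑ i ∈ Finset.range m, P.c (i + 1) * P.H (m + 1 - (i + 1)) =
        ∑ i ∈ Finset.range m, P.c (i + 1) * P.H (m - i) :=
      Finset.sum_congr rfl (fun i _ => by congr 2; omega)
    rw [he2] at hint
    rw [P.pre_length, hv]
    omega
  | cond2 s hs1 hs2 a ha rest hrest ih =>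
    rw [pre_def]
    rw [P.value_append (P.pre (s-1)) (a :: rest), P.value_cons a rest]
    simp only [P.pre_length, List.length_append, List.length_cons]
    set lp := s - 1 with hlp
    set r := rest.length with hr
    have hgetD : ∀ i ∈ Finset.range lp,
        (P.pre lp).getD i 0 * P.H (lp + (r + 1) - i) = P.c (i + 1) * P.H (lp + (r + 1) - i) :=
      fun i hi => by rw [P.pre_getD lp i (by simpa using hi)]
    rw [Finset.sum_congr rfl hgetD]
    have hT : ∑ i ∈ Finset.range lp, P.c (i + 1) * P.H (lp + (r + 1) - i)
        + P.c s * P.H (r + 1) =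
        ∑ i ∈ Finset.range s, P.c (i + 1) * P.H (lp + (r + 1) - i) := by
      have hs' : s = lp + 1 := by omega
      rw [hs', Finset.sum_range_succ]
      have h4 : lp + (r + 1) - lp = r + 1 := by omega
      rw [h4]
    have hTle : ∑ i ∈ Finset.range s, P.c (i + 1) * P.H (lp + (r + 1) - i) ≤
        P.H (lp + (r + 1) + 1) :=
      P.T_le s (lp + (r + 1)) hs1 hs2 (by omega) (by omega)
    have hcs : a + 1 ≤ P.c s := ha
    have hmul : (a + 1) * P.H (r + 1) = a * P.H (r + 1) + P.H (r + 1) := Nat.succ_mul a _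
    have h2 : (a + 1) * P.H (r + 1) ≤ P.c s * P.H (r + 1) :=
      Nat.mul_le_mul hcs le_rfl
    omega
  | cond2_last s hs1 hs2 a ha =>
    rw [pre_def]
    rw [P.value_append (P.pre (s-1)) [a]]
    simp only [P.pre_length, List.length_append, List.length_cons, List.length_nil,
      Nat.zero_add]
    set lp := s - 1 with hlp
    have hva : P.value [a] = a := by
      unfold value
      simp [P.H_one]
    have hgetD : ∀ i ∈ Finset.range lp,
        (P.pre lp).getD i 0 * P.H (lp + 1 - i) = P.c (i + 1) * P.H (lp + 1 - i) :=
      fun i hi => by rw [P.pre_getD lp i (by simpa using hi)]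
    rw [Finset.sum_congr rfl hgetD, hva]
    have hT : ∑ i ∈ Finset.range lp, P.c (i + 1) * P.H (lp + 1 - i)
        + P.c s * P.H 1 =
        ∑ i ∈ Finset.range s, P.c (i + 1) * P.H (lp + 1 - i) := by
      have hs' : s = lp + 1 := by omega
      rw [hs', Finset.sum_range_succ]
      have h4 : lp + 1 - lp = 1 := by omega
      rw [h4]
    have hTle : ∑ i ∈ Finset.range s, P.c (i + 1) * P.H (lp + 1 - i) ≤
        P.H (lp + 1 + 1) :=
      P.T_le s (lp + 1) hs1 hs2 (by omega) (by omega)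
    have hcs1 : P.c s * P.H 1 = P.c s := by rw [P.H_one, Nat.mul_one]
    omega

lemma value_ge {l : List ℕ} (hne : l ≠ []) (hh : 0 < l.headI) :
    P.H l.length ≤ P.value l := by
  obtain ⟨hd, tl, rfl⟩ : ∃ hd tl, l = hd :: tl := by
    cases l with
    | nil => exact absurd rfl hne
    | cons hd tl => exact ⟨hd, tl, rfl⟩
  have h0 : (hd :: tl).getD 0 0 * P.H ((hd :: tl).length - 0) ≤ P.value (hd :: tl) :=
    Finset.single_le_sum (f := fun i => (hd :: tl).getD i 0 * P.H ((hd :: tl).length - i))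
      (fun i _ => Nat.zero_le _) (Finset.mem_range.mpr (by simp))
  simp only [List.getD_cons_zero, Nat.sub_zero] at h0
  have hhd : 1 ≤ hd := by simp at hh; omega
  calc P.H (hd :: tl).length = 1 * P.H (hd :: tl).length := (one_mul _).symm
  _ ≤ hd * P.H (hd :: tl).length := Nat.mul_le_mul hhd le_rfl
  _ ≤ P.value (hd :: tl) := h0

/-- the set of legal lists of length `m` with positive head -/
def Aset (m : ℕ) : Set (List ℕ) := {l | P.IsLegal l ∧ 0 < l.headI ∧ l.length = m}

lemma Omega_eq_Aset (hnd : 2 ≤ P.c 1 ∨ 2 ≤ P.L) (n : ℕ) (hn : 1 ≤ n) :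
    P.Omega n = P.Aset n := by
  ext l
  constructor
  · rintro ⟨⟨hleg, hhead⟩, hge, hlt⟩
    refine ⟨hleg, hhead, ?_⟩
    have hne := P.legal_ne_nil hleg
    have hlen1 : 1 ≤ l.length := List.length_pos_iff.mpr hne
    have hv1 : P.H l.length ≤ P.value l := P.value_ge hne hhead
    have hv2 : P.value l < P.H (l.length + 1) := P.value_lt hleg
    by_contra hne2
    rcases Nat.lt_or_ge l.length n with h | h
    · have : P.H (l.length + 1) ≤ P.H n := P.H_le_H hnd _ _ (by omega) (by omega)
      omega
    · have h2 : n < l.length := by omega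
      have : P.H (n + 1) ≤ P.H l.length := P.H_le_H hnd _ _ (by omega) (by omega)
      omega
  · rintro ⟨hleg, hhead, hlen⟩
    have hne := P.legal_ne_nil hleg
    have hv1 : P.H l.length ≤ P.value l := P.value_ge hne hhead
    have hv2 : P.value l < P.H (l.length + 1) := P.value_lt hleg
    rw [hlen] at hv1 hv2
    exact ⟨⟨hleg, hhead⟩, hv1, hv2⟩

lemma legal_replicate_zero (k : ℕ) (hk : 1 ≤ k) :
    P.IsLegal (List.replicate k 0) := by
  induction k with
  | zero => omega
  | succ j ih =>
    rcases Nat.eq_zero_or_pos j with rfl | hj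
    · have h := IsLegal.cond2_last (P := P) 1 le_rfl P.L_pos 0 P.c1_pos
      simpa [pre] using h
    · have h := IsLegal.cond2 (P := P) 1 le_rfl P.L_pos 0 P.c1_pos _ (ih hj)
      simpa [pre, List.replicate_succ] using h

lemma Aset_nonempty (hnd : 2 ≤ P.c 1 ∨ 2 ≤ P.L) (m : ℕ) (hm : P.L ≤ m) :
    (P.Aset m).Nonempty := by
  have hL1 := P.L_pos
  have hc1 := P.c1_pos
  have hcL := P.cL_pos
  have hm1 : 1 ≤ m := le_trans hL1 hm
  rcases hnd with hc | hL
  · -- c 1 ≥ 2 : use block [c 1 - 1]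
    rcases Nat.eq_or_lt_of_le hm1 with hm' | hm'
    · -- m = 1
      refine ⟨[P.c 1 - 1], ?_, by simp; omega, by simp; omega⟩
      have h := IsLegal.cond2_last (P := P) 1 le_rfl hL1 (P.c 1 - 1) (by omega)
      simpa [pre] using h
    · -- m ≥ 2
      refine ⟨(P.c 1 - 1) :: List.replicate (m - 1) 0, ?_, by simp; omega, by simp; omega⟩
      have h := IsLegal.cond2 (P := P) 1 le_rfl hL1 (P.c 1 - 1) (by omega) _
        (P.legal_replicate_zero (m - 1) (by omega))
      simpa [pre] using h
  · -- L ≥ 2 : use block (c 1, …, c (L-1), c L - 1)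
    rcases Nat.eq_or_lt_of_le hm with hm' | hm'
    · -- m = L
      refine ⟨P.pre (P.L - 1) ++ [P.c P.L - 1], ?_, ?_, ?_⟩
      · have h := IsLegal.cond2_last (P := P) P.L hL1 le_rfl (P.c P.L - 1) (by omega)
        rw [pre_def] at h
        exact h
      · have h := P.headI_pre_cons (P.L - 1) (P.c P.L - 1) []
        rw [h]
        simp only [if_neg (by omega : ¬ (P.L - 1 = 0))]
        omega
      · simp
        omega
    · -- m > L
      refine ⟨P.pre (P.L - 1) ++ (P.c P.L - 1) :: List.replicate (m - P.L) 0, ?_, ?_, ?_⟩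
      · have h := IsLegal.cond2 (P := P) P.L hL1 le_rfl (P.c P.L - 1) (by omega) _
          (P.legal_replicate_zero (m - P.L) (by omega))
        rw [pre_def] at h
        exact h
      · rw [P.headI_pre_cons]
        simp only [if_neg (by omega : ¬ (P.L - 1 = 0))]
        omega
      · simp
        omega

lemma Aset_finite (m : ℕ) : (P.Aset m).Finite := by
  have hb : ∀ (C m : ℕ), {l : List ℕ | l.length = m ∧ ∀ x ∈ l, x ≤ C}.Finite := by
    intro C m
    induction m with
    | zero =>
      refine Set.Finite.subset (Set.finite_singleton []) ?_
      rintro l ⟨hl, -⟩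
      simp [List.length_eq_zero_iff.mp hl]
    | succ k ih =>
      refine Set.Finite.subset (Set.Finite.image2 List.cons (Set.finite_Iic C) ih) ?_
      rintro l ⟨hl, hx⟩
      cases l with
      | nil => simp at hl
      | cons hd tl =>
        refine Set.mem_image2_of_mem ?_ ?_
        · exact hx hd (by simp)
        · exact ⟨by simpa using hl, fun x hxx => hx x (by simp [hxx])⟩
  refine Set.Finite.subset (hb P.size m) ?_
  rintro l ⟨hleg, -, hlen⟩
  exact ⟨hlen, P.legal_entry_le hleg⟩

/-! ### ell and type2Block -/

lemma ell_of_blk (s a : ℕ) (hs1 : 1 ≤ s) (hs2 : s ≤ P.L) (ha : a < P.c s) :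
    P.ell (P.sig (s - 1) + a) = s ∧
      P.type2Block (P.sig (s - 1) + a) = P.pre (s - 1) ++ [a] := by
  have hset : ∀ u : ℕ, (u ∈ {s' : ℕ | u < u} → True) := fun _ _ => trivial
  set t := P.sig (s - 1) + a with ht
  have hmem : s ∈ {s' : ℕ | t < ∑ i ∈ Finset.Icc 1 s', P.c i} := by
    show t < P.sig s
    have : P.sig s = P.sig (s - 1) + P.c s := by
      have hs' : s = (s - 1) + 1 := by omega
      rw [hs', P.sig_succ]
      congr 2 <;> omega
    omega
  have hnotmem : ∀ s' < s, s' ∉ {s' : ℕ | t < ∑ i ∈ Finset.Icc 1 s', P.c i} := by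
    intro s' hs'
    show ¬ (t < P.sig s')
    have : P.sig s' ≤ P.sig (s - 1) := P.sig_mono (by omega)
    omega
  have hell : P.ell t = s := by
    unfold ell
    have h1 : sInf {s' : ℕ | t < ∑ i ∈ Finset.Icc 1 s', P.c i} ≤ s := Nat.sInf_le hmem
    have h2 := Nat.sInf_mem (⟨s, hmem⟩ : Set.Nonempty {s' : ℕ | t < ∑ i ∈ Finset.Icc 1 s', P.c i})
    rcases Nat.lt_or_ge (sInf {s' : ℕ | t < ∑ i ∈ Finset.Icc 1 s', P.c i}) s with h | h
    · exact absurd h2 (hnotmem _ h)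
    · omega
  refine ⟨hell, ?_⟩
  unfold type2Block
  rw [hell]
  rw [pre_def]
  congr 1
  have : (∑ i ∈ Finset.Icc 1 (s - 1), P.c i) = P.sig (s - 1) := rfl
  rw [this]
  congr 1
  omega

lemma blk_sum (s a : ℕ) : (P.pre (s - 1) ++ [a]).sum = P.sig (s - 1) + a := by
  rw [List.sum_append, P.pre_sum]
  simp

lemma blk_sum_lt (s a : ℕ) (hs1 : 1 ≤ s) (hs2 : s ≤ P.L) (ha : a < P.c s) :
    P.sig (s - 1) + a < P.size := by
  have h1 : P.sig s = P.sig (s - 1) + P.c s := by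
    have hs' : s = (s - 1) + 1 := by omega
    rw [hs', P.sig_succ]
    congr 2 <;> omega
  have h2 : P.sig s ≤ P.sig P.L := P.sig_mono hs2
  have h3 : P.size = P.sig P.L := rfl
  omega

lemma ell_pos (t : ℕ) (ht : t < P.size) : 1 ≤ P.ell t := by
  unfold ell
  have hne : Set.Nonempty {s' : ℕ | t < ∑ i ∈ Finset.Icc 1 s', P.c i} := ⟨P.L, ht⟩
  have h2 := Nat.sInf_mem hne
  by_contra h
  have h0 : sInf {s' : ℕ | t < ∑ i ∈ Finset.Icc 1 s', P.c i} = 0 := by omega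
  rw [h0] at h2
  simp at h2

lemma ell_le (t : ℕ) (ht : t < P.size) : P.ell t ≤ P.L := by
  exact Nat.sInf_le ht

lemma type2Block_is_blk (t : ℕ) (ht : t < P.size) :
    ∃ s a, 1 ≤ s ∧ s ≤ P.L ∧ a < P.c s ∧ s = P.ell t ∧ P.sig (s - 1) + a = t ∧
      P.type2Block t = P.pre (s - 1) ++ [a] := by
  have h1 := P.ell_pos t ht
  have h2 := P.ell_le t ht
  set s := P.ell t with hs
  have hsdef : s = sInf {s' : ℕ | t < ∑ i ∈ Finset.Icc 1 s', P.c i} := rfl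
  have hsmem : t < P.sig s := by
    have := Nat.sInf_mem (⟨P.L, ht⟩ : Set.Nonempty {s' : ℕ | t < ∑ i ∈ Finset.Icc 1 s', P.c i})
    exact this
  have hsig : P.sig (s - 1) ≤ t := by
    by_contra h
    have : s - 1 ∈ {s' : ℕ | t < ∑ i ∈ Finset.Icc 1 s', P.c i} := by
      show t < P.sig (s - 1)
      omega
    have := Nat.sInf_le this
    omega
  have hstep : P.sig s = P.sig (s - 1) + P.c s := by
    have hs' : s = (s - 1) + 1 := by omega
    rw [hs', P.sig_succ]
    congr 2 <;> omega
  refine ⟨s, t - P.sig (s - 1), h1, h2, by omega, rfl, by omega, ?_⟩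
  unfold type2Block
  rw [pre_def, ← hs]
  rfl

/-! ### insertion map -/

/-- insert block `B` before the last block of `l` -/
def ins (B l : List ℕ) : List ℕ :=
  ((P.blocks l).insertIdx ((P.blocks l).length - 1) B).flatten

lemma insertIdx_append_singleton {α : Type*} (ys : List α) (B z : α) :
    (ys ++ [z]).insertIdx ys.length B = ys ++ [B, z] := by
  induction ys with
  | nil => rfl
  | cons y ys ih => simpa [List.insertIdx_succ_cons] using ih

lemma insertIdx_before_last {α : Type*} (bs : List α) (hbs : bs ≠ []) (B : α) :
    bs.insertIdx (bs.length - 1) B = bs.dropLast ++ [B, bs.getLast hbs] := by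
  have h := insertIdx_append_singleton bs.dropLast B (bs.getLast hbs)
  rw [List.length_dropLast] at h
  rw [List.dropLast_append_getLast hbs] at h
  exact h

lemma ins_single (B l : List ℕ) (hb : P.blocks l = [l]) : P.ins B l = B ++ l := by
  unfold ins
  rw [hb]
  simp

lemma ins_append (B : List ℕ) (s a : ℕ) (r : List ℕ) (h1 : 1 ≤ s) (hne : a ≠ P.c s)
    (hr : P.blocks r ≠ []) :
    P.ins B (P.pre (s - 1) ++ a :: r) = P.pre (s - 1) ++ a :: P.ins B r := by
  have hbl := P.blocks_blk s a r h1 hne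
  have hlen1 : 1 ≤ (P.blocks r).length := List.length_pos_iff.mpr hr
  unfold ins
  rw [hbl]
  have h2 : ((P.pre (s-1) ++ [a]) :: P.blocks r).length - 1 = ((P.blocks r).length - 1) + 1 := by
    simp only [List.length_cons]
    omega
  rw [h2, List.insertIdx_succ_cons, List.flatten_cons]
  simp [List.append_assoc]

lemma ins_spec (sB aB : ℕ) (hsB1 : 1 ≤ sB) (hsB2 : sB ≤ P.L) (haB : aB < P.c sB)
    {l : List ℕ} (hl : P.IsLegal l) :
    P.IsLegal (P.ins (P.pre (sB - 1) ++ [aB]) l) ∧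
    (P.ins (P.pre (sB - 1) ++ [aB]) l).length = sB + l.length ∧
    (P.ins (P.pre (sB - 1) ++ [aB]) l).sum = (P.pre (sB - 1) ++ [aB]).sum + l.sum ∧
    P.blocks (P.ins (P.pre (sB - 1) ++ [aB]) l) =
      (P.blocks l).insertIdx ((P.blocks l).length - 1) (P.pre (sB - 1) ++ [aB]) ∧
    (2 ≤ (P.blocks l).length → (P.ins (P.pre (sB - 1) ++ [aB]) l).headI = l.headI) := by
  induction hl with
  | cond1 m h1 h2 =>
    rw [pre_def]
    have hb : P.blocks (P.pre m) = [P.pre m] := P.blocks_pre m h1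
    have hins : P.ins (P.pre (sB - 1) ++ [aB]) (P.pre m) = (P.pre (sB - 1) ++ [aB]) ++ P.pre m :=
      P.ins_single _ _ hb
    have hform : (P.pre (sB - 1) ++ [aB]) ++ P.pre m = P.pre (sB - 1) ++ aB :: P.pre m := by
      simp
    refine ⟨?_, ?_, ?_, ?_, ?_⟩
    · rw [hins, hform]
      have h := IsLegal.cond2 (P := P) sB hsB1 hsB2 aB haB _ (IsLegal.cond1 m h1 h2)
      rw [pre_def] at h
      exact h
    · rw [hins]
      simp
      omega
    · rw [hins, List.sum_append]
    · rw [hins, hform, hb]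
      rw [P.blocks_blk sB aB (P.pre m) hsB1 (ne_of_lt haB), hb]
      simp
    · intro hcon
      rw [hb] at hcon
      simp at hcon
  | cond2 s hs1 hs2 a ha rest hrest ih =>
    rw [pre_def]
    obtain ⟨ih1, ih2, ih3, ih4, ih5⟩ := ih
    have hbr : P.blocks rest ≠ [] := P.legal_blocks_ne_nil hrest
    have hkr : 1 ≤ (P.blocks rest).length := List.length_pos_iff.mpr hbr
    have hins : P.ins (P.pre (sB - 1) ++ [aB]) (P.pre (s-1) ++ a :: rest) =
        P.pre (s-1) ++ a :: P.ins (P.pre (sB - 1) ++ [aB]) rest :=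
      P.ins_append _ s a rest hs1 (ne_of_lt ha) hbr
    have hbl : P.blocks (P.pre (s-1) ++ a :: rest) =
        (P.pre (s-1) ++ [a]) :: P.blocks rest := P.blocks_blk s a rest hs1 (ne_of_lt ha)
    refine ⟨?_, ?_, ?_, ?_, ?_⟩
    · rw [hins]
      have h := IsLegal.cond2 (P := P) s hs1 hs2 a ha _ ih1
      rw [pre_def] at h
      exact h
    · rw [hins]
      simp only [List.length_append, List.length_cons, P.pre_length, ih2]
      omega
    · rw [hins]
      simp only [List.sum_append, List.sum_cons, ih3]
      omega
    · rw [hins, hbl]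
      rw [P.blocks_blk s a _ hs1 (ne_of_lt ha), ih4]
      have h3 : ((P.pre (s-1) ++ [a]) :: P.blocks rest).length - 1 =
          ((P.blocks rest).length - 1) + 1 := by
        simp only [List.length_cons]
        omega
      rw [h3, List.insertIdx_succ_cons]
    · intro _
      rw [hins]
      rw [P.headI_pre_cons, P.headI_pre_cons]
  | cond2_last s hs1 hs2 a ha =>
    rw [pre_def]
    have hb : P.blocks (P.pre (s-1) ++ [a]) = [P.pre (s-1) ++ [a]] := by
      rw [P.blocks_blk s a [] hs1 (ne_of_lt ha), P.blocks_nil]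
    have hins : P.ins (P.pre (sB - 1) ++ [aB]) (P.pre (s-1) ++ [a]) =
        (P.pre (sB - 1) ++ [aB]) ++ (P.pre (s-1) ++ [a]) := P.ins_single _ _ hb
    have hform : (P.pre (sB - 1) ++ [aB]) ++ (P.pre (s-1) ++ [a]) =
        P.pre (sB - 1) ++ aB :: (P.pre (s-1) ++ [a]) := by simp
    refine ⟨?_, ?_, ?_, ?_, ?_⟩
    · rw [hins, hform]
      have h := IsLegal.cond2 (P := P) sB hsB1 hsB2 aB haB _
        (IsLegal.cond2_last s hs1 hs2 a ha)
      rw [pre_def] at h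
      exact h
    · rw [hins]
      simp
      omega
    · rw [hins, List.sum_append]
    · rw [hins, hform, hb]
      rw [P.blocks_blk sB aB _ hsB1 (ne_of_lt haB), hb]
      simp
    · intro hcon
      rw [hb] at hcon
      simp at hcon

lemma Z_ins (sB aB : ℕ) (hsB1 : 1 ≤ sB) (hsB2 : sB ≤ P.L) (haB : aB < P.c sB)
    {l : List ℕ} (hl : P.IsLegal l) :
    P.Z (P.ins (P.pre (sB - 1) ++ [aB]) l) = P.sig (sB - 1) + aB := by
  obtain ⟨h1, h2, h3, h4, h5⟩ := P.ins_spec sB aB hsB1 hsB2 haB hl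
  have hbs : P.blocks l ≠ [] := P.legal_blocks_ne_nil hl
  unfold Z stlBlock
  rw [h4, insertIdx_before_last (P.blocks l) hbs _]
  rw [List.reverse_append]
  simp only [List.reverse_cons, List.reverse_nil, List.nil_append, List.cons_append,
    List.getD_cons_succ, List.getD_cons_zero]
  exact P.blk_sum sB aB

lemma ins_inj (sB aB : ℕ) (hsB1 : 1 ≤ sB) (hsB2 : sB ≤ P.L) (haB : aB < P.c sB)
    {l₁ l₂ : List ℕ} (h1 : P.IsLegal l₁) (h2 : P.IsLegal l₂)
    (he : P.ins (P.pre (sB - 1) ++ [aB]) l₁ = P.ins (P.pre (sB - 1) ++ [aB]) l₂) :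
    l₁ = l₂ := by
  obtain ⟨_, _, _, h14, _⟩ := P.ins_spec sB aB hsB1 hsB2 haB h1
  obtain ⟨_, _, _, h24, _⟩ := P.ins_spec sB aB hsB1 hsB2 haB h2
  have hb1 : P.blocks l₁ ≠ [] := P.legal_blocks_ne_nil h1
  have hb2 : P.blocks l₂ ≠ [] := P.legal_blocks_ne_nil h2
  have he2 := congrArg P.blocks he
  rw [h14, h24, insertIdx_before_last _ hb1, insertIdx_before_last _ hb2] at he2
  have hll : (P.blocks l₁).dropLast.length = (P.blocks l₂).dropLast.length := by
    have h1l := congrArg List.length he2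
    simp only [List.length_append, List.length_cons, List.length_nil] at h1l
    omega
  obtain ⟨hd, ht⟩ := List.append_inj he2 hll
  have hz : (P.blocks l₁).getLast hb1 = (P.blocks l₂).getLast hb2 := by
    simpa using ht
  have hbs : P.blocks l₁ = P.blocks l₂ := by
    conv_lhs => rw [← List.dropLast_append_getLast hb1]
    conv_rhs => rw [← List.dropLast_append_getLast hb2]
    rw [hd, hz]
  have hf1 := P.legal_flatten_blocks h1
  have hf2 := P.legal_flatten_blocks h2
  rw [← hf1, ← hf2, hbs]

lemma ins_surj {l' : List ℕ} (h : P.IsLegal l') (hk : 2 ≤ (P.blocks l').length) :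
    P.Z l' < P.size ∧ ∃ l, P.IsLegal l ∧ l.length + P.ell (P.Z l') = l'.length ∧
      P.ins (P.type2Block (P.Z l')) l = l' ∧
      (3 ≤ (P.blocks l').length → l.headI = l'.headI) := by
  induction h with
  | cond1 m h1 h2 =>
    exfalso
    rw [pre_def, P.blocks_pre m h1] at hk
    simp at hk
  | cond2 s hs1 hs2 a ha rest hrest ih =>
    rw [pre_def] at hk ⊢
    have hbl : P.blocks (P.pre (s-1) ++ a :: rest) =
        (P.pre (s-1) ++ [a]) :: P.blocks rest := P.blocks_blk s a rest hs1 (ne_of_lt ha)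
    have hbr : P.blocks rest ≠ [] := P.legal_blocks_ne_nil hrest
    have hkr : 1 ≤ (P.blocks rest).length := List.length_pos_iff.mpr hbr
    rcases Nat.eq_or_lt_of_le hkr with hkr1 | hkr2
    · -- blocks rest is a single block
      obtain ⟨r₀, hr0⟩ := List.length_eq_one_iff.mp hkr1.symm
      have hrr : r₀ = rest := by
        have := P.legal_flatten_blocks hrest
        rw [hr0] at this
        simpa using this
      rw [hrr] at hr0
      have hZ : P.Z (P.pre (s-1) ++ a :: rest) = P.sig (s-1) + a := by
        unfold Z stlBlock
        rw [hbl, hr0]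
        simp only [List.reverse_cons, List.reverse_nil, List.nil_append, List.cons_append,
          List.getD_cons_succ, List.getD_cons_zero]
        exact P.blk_sum s a
      have htS : P.sig (s-1) + a < P.size := P.blk_sum_lt s a hs1 hs2 ha
      obtain ⟨hell, hblk⟩ := P.ell_of_blk s a hs1 hs2 ha
      rw [hZ]
      refine ⟨htS, rest, hrest, ?_, ?_, ?_⟩
      · rw [hell]
        simp
        omega
      · rw [hblk, P.ins_single _ _ hr0]
        simp
      · intro hcon
        rw [hbl, hr0] at hcon
        simp at hcon
    · -- blocks rest has ≥ 2 block
      have hZ : P.Z (P.pre (s-1) ++ a :: rest) = P.Z rest := by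
        unfold Z stlBlock
        rw [hbl, List.reverse_cons]
        rw [List.getD_append _ _ _ _ (by simpa using hkr2)]
      obtain ⟨htS, l₀, hleg₀, hlen₀, hins₀, _⟩ := ih hkr2
      rw [hZ]
      refine ⟨htS, P.pre (s-1) ++ a :: l₀, ?_, ?_, ?_, ?_⟩
      · have h := IsLegal.cond2 (P := P) s hs1 hs2 a ha _ hleg₀
        rw [pre_def] at h
        exact h
      · simp only [List.length_append, List.length_cons, P.pre_length]
        omega
      · rw [P.ins_append _ s a l₀ hs1 (ne_of_lt ha) (P.legal_blocks_ne_nil hleg₀), hins₀]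
      · intro _
        rw [P.headI_pre_cons, P.headI_pre_cons]
  | cond2_last s hs1 hs2 a ha =>
    exfalso
    rw [pre_def] at hk
    rw [P.blocks_blk s a [] hs1 (ne_of_lt ha), P.blocks_nil] at hk
    simp at hk

lemma blocks_two_le {l : List ℕ} (h : P.IsLegal l) (hl : P.L < l.length) :
    2 ≤ (P.blocks l).length := by
  obtain ⟨s, a, r, hs1, hs2, ha, hr, rfl⟩ := P.legal_of_long h hl
  rw [P.blocks_blk s a r hs1 (ne_of_lt ha)]
  have := P.legal_blocks_ne_nil hr
  have := List.length_pos_iff.mpr this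
  simp only [List.length_cons]
  omega

lemma blocks_three_le {l : List ℕ} (h : P.IsLegal l) (hl : 2 * P.L < l.length) :
    3 ≤ (P.blocks l).length := by
  have h1 := P.legal_length_le h
  by_contra hcon
  have h2 : (P.blocks l).length ≤ 2 := by omega
  have h3 : P.L * (P.blocks l).length ≤ P.L * 2 := Nat.mul_le_mul_left _ h2
  omega

end PLRS
namespace PLRS

variable (P : PLRS)

lemma expectOn_finite {A : Set (List ℕ)} (hA : A.Finite) (g : List ℕ → ℝ) :
    expectOn A g = (∑ l ∈ hA.toFinset, g l) / (hA.toFinset.card : ℝ) := by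
  unfold expectOn
  conv_lhs => rw [← hA.coe_toFinset]
  rw [finsum_mem_coe_finset, Set.ncard_coe_finset]

lemma ell_zero : P.ell 0 = 1 := by
  have h := (P.ell_of_blk 1 0 le_rfl P.L_pos P.c1_pos).1
  simpa using h

lemma mem_AsetFin (m : ℕ) (l : List ℕ) :
    l ∈ (P.Aset_finite m).toFinset ↔ P.IsLegal l ∧ 0 < l.headI ∧ l.length = m := by
  rw [Set.Finite.mem_toFinset]
  rfl

lemma ins_mem_spec (n t : ℕ) (hn : 2 * P.L < n) (ht : t < P.size) :
    ∀ l ∈ P.Aset (n - P.ell t),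
      P.IsLegal (P.ins (P.type2Block t) l) ∧ (P.ins (P.type2Block t) l).length = n ∧
      0 < (P.ins (P.type2Block t) l).headI ∧ P.Z (P.ins (P.type2Block t) l) = t ∧
      (P.ins (P.type2Block t) l).sum = t + l.sum := by
  obtain ⟨s, aB, hs1, hs2, haB, hsell, hsum, hblk⟩ := P.type2Block_is_blk t ht
  rintro l ⟨hleg, hhead, hlen⟩
  have hellle : P.ell t ≤ P.L := by omega
  have hlong : P.L < l.length := by rw [hlen]; omega
  have h2b := P.blocks_two_le hleg hlong
  rw [hblk]
  obtain ⟨i1, i2, i3, i4, i5⟩ := P.ins_spec s aB hs1 hs2 haB hleg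
  refine ⟨i1, ?_, ?_, ?_, ?_⟩
  · rw [i2, hlen]; omega
  · rw [i5 h2b]; exact hhead
  · rw [P.Z_ins s aB hs1 hs2 haB hleg]; omega
  · rw [i3, P.blk_sum]; omega

lemma fiber_card (n t : ℕ) (hn : 2 * P.L < n) (ht : t < P.size) :
    ((P.Aset_finite n).toFinset.filter (fun l => P.Z l = t)).card
      = ((P.Aset_finite (n - P.ell t)).toFinset).card := by
  obtain ⟨s, aB, hs1, hs2, haB, hsell, hsum, hblk⟩ := P.type2Block_is_blk t ht
  symm
  refine Finset.card_bij (fun l _ => P.ins (P.type2Block t) l) ?_ ?_ ?_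
  · intro l hl
    rw [P.mem_AsetFin] at hl
    obtain ⟨h1, h2, h3, h4, h5⟩ := P.ins_mem_spec n t hn ht l hl
    rw [Finset.mem_filter, P.mem_AsetFin]
    exact ⟨⟨h1, h3, h2⟩, h4⟩
  · intro l₁ h₁ l₂ h₂ he
    rw [P.mem_AsetFin] at h₁ h₂
    rw [hblk] at he
    exact P.ins_inj s aB hs1 hs2 haB h₁.1 h₂.1 he
  · intro l' hl'
    rw [Finset.mem_filter, P.mem_AsetFin] at hl'
    obtain ⟨⟨hleg', hhead', hlen'⟩, hZ⟩ := hl'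
    have h3b := P.blocks_three_le hleg' (by omega)
    obtain ⟨_, l, hlegl, hlenl, hinsl, hheadl⟩ := P.ins_surj hleg' (by omega)
    rw [hZ] at hlenl hinsl
    refine ⟨l, ?_, hinsl⟩
    rw [P.mem_AsetFin]
    exact ⟨hlegl, by rw [hheadl h3b]; exact hhead', by omega⟩

lemma fiber_sum (n t : ℕ) (hn : 2 * P.L < n) (ht : t < P.size) :
    ∑ l ∈ (P.Aset_finite n).toFinset.filter (fun l => P.Z l = t), ((l.sum : ℝ))
      = ∑ l ∈ (P.Aset_finite (n - P.ell t)).toFinset, ((t : ℝ) + l.sum) := by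
  obtain ⟨s, aB, hs1, hs2, haB, hsell, hsum, hblk⟩ := P.type2Block_is_blk t ht
  symm
  refine Finset.sum_bij (fun l _ => P.ins (P.type2Block t) l) ?_ ?_ ?_ ?_
  · intro l hl
    rw [P.mem_AsetFin] at hl
    obtain ⟨h1, h2, h3, h4, h5⟩ := P.ins_mem_spec n t hn ht l hl
    rw [Finset.mem_filter, P.mem_AsetFin]
    exact ⟨⟨h1, h3, h2⟩, h4⟩
  · intro l₁ h₁ l₂ h₂ he
    rw [P.mem_AsetFin] at h₁ h₂
    rw [hblk] at he
    exact P.ins_inj s aB hs1 hs2 haB h₁.1 h₂.1 he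
  · intro l' hl'
    rw [Finset.mem_filter, P.mem_AsetFin] at hl'
    obtain ⟨⟨hleg', hhead', hlen'⟩, hZ⟩ := hl'
    have h3b := P.blocks_three_le hleg' (by omega)
    obtain ⟨_, l, hlegl, hlenl, hinsl, hheadl⟩ := P.ins_surj hleg' (by omega)
    rw [hZ] at hlenl hinsl
    refine ⟨l, ?_, hinsl⟩
    rw [P.mem_AsetFin]
    exact ⟨hlegl, by rw [hheadl h3b]; exact hhead', by omega⟩
  · intro l hl
    rw [P.mem_AsetFin] at hl
    obtain ⟨h1, h2, h3, h4, h5⟩ := P.ins_mem_spec n t hn ht l hl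
    rw [h5]
    push_cast
    ring

lemma Z_lt_size (n : ℕ) (hn : P.L < n) (l : List ℕ) (hl : l ∈ P.Aset n) :
    P.Z l < P.size := by
  obtain ⟨hleg, hhead, hlen⟩ := hl
  have h2b := P.blocks_two_le hleg (by omega)
  exact (P.ins_surj hleg h2b).1

lemma cardA_mono (m : ℕ) (hm : P.L < m) :
    ((P.Aset_finite m).toFinset).card ≤ ((P.Aset_finite (m + 1)).toFinset).card := by
  have hc1 := P.c1_pos
  refine Finset.card_le_card_of_injOn (fun l => P.ins (P.pre (1 - 1) ++ [0]) l) ?_ ?_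
  · intro l hl
    rw [Finset.mem_coe, P.mem_AsetFin] at hl
    obtain ⟨hleg, hhead, hlen⟩ := hl
    have h2b := P.blocks_two_le hleg (by omega)
    obtain ⟨i1, i2, i3, i4, i5⟩ := P.ins_spec 1 0 le_rfl P.L_pos hc1 hleg
    rw [Finset.mem_coe, P.mem_AsetFin]
    exact ⟨i1, by rw [i5 h2b]; exact hhead, by rw [i2]; omega⟩
  · intro l₁ h₁ l₂ h₂ he
    simp only [Finset.mem_coe, P.mem_AsetFin] at h₁ h₂
    exact P.ins_inj 1 0 le_rfl P.L_pos hc1 h₁.1 h₂.1 he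

lemma cardA_le (m₁ m₂ : ℕ) (h1 : P.L < m₁) (h12 : m₁ ≤ m₂) :
    ((P.Aset_finite m₁).toFinset).card ≤ ((P.Aset_finite m₂).toFinset).card := by
  induction m₂, h12 using Nat.le_induction with
  | base => exact le_refl _
  | succ k hk ih => exact le_trans ih (P.cardA_mono k (by omega))

lemma cardA_pos (hnd : 2 ≤ P.c 1 ∨ 2 ≤ P.L) (m : ℕ) (hm : P.L ≤ m) :
    0 < ((P.Aset_finite m).toFinset).card := by
  rw [Finset.card_pos, Set.Finite.toFinset_nonempty]
  exact P.Aset_nonempty hnd m hm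

end PLRS
open PLRS

set_option maxHeartbeats 2000000 in
theorem var_Y_lower (P : PLRS) (a b : ℝ) (ha : 0 < a) (f : ℕ → ℝ)
    (hf : ∀ r : ℕ, P.L < r → P.expectK r = a * (r : ℝ) + b + f r)
    (hf0 : Filter.Tendsto f Filter.atTop (nhds 0)) :
    ∃ N : ℕ, 2 * P.L < N ∧ ∀ n : ℕ, N < n →
      a ^ 2 / (2 * (P.size : ℝ)) <
        varOn (P.Omega n) (fun l => (P.Z l : ℝ) + f (n - P.Lfn l) - a * (P.Lfn l : ℝ)) := by
  have hL1 := P.L_pos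
  have hc1 := P.c1_pos
  by_cases hnd : 2 ≤ P.c 1 ∨ 2 ≤ P.L
  swap
  · -- degenerate case : L = 1 and c 1 = 1, everything empty, contradiction
    exfalso
    push_neg at hnd
    obtain ⟨hc1', hL'⟩ := hnd
    have hc1e : P.c 1 = 1 := by omega
    have hLe : P.L = 1 := by omega
    have hH : ∀ m, 1 ≤ m → P.H m = 1 := by
      intro m hm
      induction m with
      | zero => omega
      | succ k ih =>
        rcases Nat.eq_zero_or_pos k with rfl | hk
        · exact P.H_one
        · have hrec := P.H_rec k (by omega)
          rw [hLe] at hrec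
          rw [hrec]
          simp only [Finset.Icc_self, Finset.sum_singleton]
          rw [hc1e, one_mul]
          have : k + 1 - 1 = k := by omega
          rw [this, ih hk]
    have hOm : ∀ r : ℕ, 1 ≤ r → P.Omega r = ∅ := by
      intro r hr
      ext l
      simp only [Omega, Set.mem_setOf_eq, Set.mem_empty_iff_false, iff_false]
      rintro ⟨-, hge, hlt⟩
      rw [hH r hr, hH (r+1) (by omega)] at *
      omega
    have hEK : ∀ r : ℕ, 1 ≤ r → P.expectK r = 0 := by
      intro r hr
      unfold expectK expect
      rw [hOm r hr]
      unfold expectOn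
      rw [finsum_mem_empty]
      simp
    obtain ⟨N₀, hN₀⟩ := Metric.tendsto_atTop.mp hf0 1 one_pos
    obtain ⟨r₀, hr₀⟩ := exists_nat_gt ((1 + |b|) / a)
    set r : ℕ := max (max N₀ 2) r₀ with hrdef
    have hr2 : 2 ≤ r := le_trans (le_max_right N₀ 2) (le_max_left _ _)
    have hfr : f r = -(a * r + b) := by
      have h := hf r (by omega)
      rw [hEK r (by omega)] at h
      linarith
    have hdist := hN₀ r (le_trans (le_max_left N₀ 2) (le_max_left _ _))
    rw [Real.dist_eq, sub_zero] at hdist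
    have hfr1 : -1 < f r := (abs_lt.mp hdist).1
    have hrr₀ : (r₀ : ℝ) ≤ r := by
      have : r₀ ≤ r := le_max_right _ _
      exact_mod_cast this
    have har : 1 + |b| < a * r := by
      have h1 : (1 + |b|) / a < (r : ℝ) := lt_of_lt_of_le hr₀ hrr₀
      rw [div_lt_iff₀ ha] at h1
      linarith [h1]
    have hb : -|b| ≤ b := neg_abs_le b
    nlinarith [har, hfr, hfr1, hb]
  · -- main case
    have hS1 : 1 ≤ P.size := P.one_le_size
    have hS0 : (1:ℝ) ≤ (P.size : ℝ) := by exact_mod_cast hS1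
    have hSpos : (0:ℝ) < (P.size : ℝ) := by linarith
    obtain ⟨ε, hεdef⟩ : ∃ ε : ℝ, ε = a / (4 * ((P.size : ℝ) + 1)) := ⟨_, rfl⟩
    have hε0 : 0 < ε := by rw [hεdef]; positivity
    obtain ⟨N₀, hN₀⟩ := Metric.tendsto_atTop.mp hf0 ε hε0
    refine ⟨max (3 * P.L + 1) (N₀ + P.L + 1), by
      have := le_max_left (3 * P.L + 1) (N₀ + P.L + 1)
      omega, ?_⟩
    intro n hn
    have hn3L : 3 * P.L + 1 < n := lt_of_le_of_lt (le_max_left _ _) hn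
    have hnN₀ : N₀ + P.L + 1 < n := lt_of_le_of_lt (le_max_right _ _) hn
    have hn2L : 2 * P.L < n := by omega
    -- the value of Y depends only on Z
    have hYeq : ∀ l : List ℕ,
        ((P.Z l : ℝ) + f (n - P.Lfn l) - a * (P.Lfn l : ℝ))
          = (fun t : ℕ => (t : ℝ) + f (n - P.ell t) - a * (P.ell t : ℝ)) (P.Z l) :=
      fun l => rfl
    set y : ℕ → ℝ := fun t : ℕ => (t : ℝ) + f (n - P.ell t) - a * (P.ell t : ℝ) with hydef
    -- fiberwise decomposition
    have hmaps : ∀ l ∈ (P.Aset_finite n).toFinset, P.Z l ∈ Finset.range P.size := by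
      intro l hl
      rw [P.mem_AsetFin] at hl
      rw [Finset.mem_range]
      exact P.Z_lt_size n (by omega) l hl
    have hfib : ∀ g : ℕ → ℝ, ∑ l ∈ (P.Aset_finite n).toFinset, g (P.Z l)
        = ∑ t ∈ Finset.range P.size,
            (((P.Aset_finite (n - P.ell t)).toFinset.card : ℝ)) * g t := by
      intro g
      rw [← Finset.sum_fiberwise_of_maps_to hmaps (fun l => g (P.Z l))]
      refine Finset.sum_congr rfl (fun t htmem => ?_)
      have hc : ∀ l ∈ (P.Aset_finite n).toFinset.filter (fun l => P.Z l = t),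
          g (P.Z l) = g t := by
        intro l hl
        rw [(Finset.mem_filter.mp hl).2]
      rw [Finset.sum_congr rfl hc, Finset.sum_const,
        P.fiber_card n t hn2L (Finset.mem_range.mp htmem), nsmul_eq_mul]
    -- cardinality identity
    have hcard : ((P.Aset_finite n).toFinset.card : ℝ)
        = ∑ t ∈ Finset.range P.size, ((P.Aset_finite (n - P.ell t)).toFinset.card : ℝ) := by
      have h := Finset.card_eq_sum_card_fiberwise hmaps
      push_cast [h]
      refine Finset.sum_congr rfl (fun t htmem => ?_)
      rw [P.fiber_card n t hn2L (Finset.mem_range.mp htmem)]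
    -- sum-of-summands identity
    have hSK : ∑ l ∈ (P.Aset_finite n).toFinset, ((l.sum : ℝ))
        = ∑ t ∈ Finset.range P.size,
            (((P.Aset_finite (n - P.ell t)).toFinset.card : ℝ) * t
              + ∑ l ∈ (P.Aset_finite (n - P.ell t)).toFinset, ((l.sum : ℝ))) := by
      rw [← Finset.sum_fiberwise_of_maps_to hmaps (fun l => ((l.sum : ℝ)))]
      refine Finset.sum_congr rfl (fun t htmem => ?_)
      rw [P.fiber_sum n t hn2L (Finset.mem_range.mp htmem)]
      rw [Finset.sum_add_distrib, Finset.sum_const, nsmul_eq_mul]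
    -- expectK in finit terms
    have hEKfin : ∀ m : ℕ, P.L < m →
        ∑ l ∈ (P.Aset_finite m).toFinset, ((l.sum : ℝ))
          = ((P.Aset_finite m).toFinset.card : ℝ) * (a * m + b + f m) := by
      intro m hm
      have hcpos : 0 < ((P.Aset_finite m).toFinset.card : ℝ) := by
        exact_mod_cast P.cardA_pos hnd m (by omega)
      have h := hf m hm
      unfold expectK expect at h
      rw [P.Omega_eq_Aset hnd m (by omega), expectOn_finite (P.Aset_finite m)] at h
      rw [div_eq_iff (ne_of_gt hcpos)] at h
      rw [mul_comm]
      exact h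
    -- ell bounds
    have hellb : ∀ t ∈ Finset.range P.size, 1 ≤ P.ell t ∧ P.ell t ≤ P.L := by
      intro t htmem
      rw [Finset.mem_range] at htmem
      exact ⟨P.ell_pos t htmem, P.ell_le t htmem⟩
    -- mean of y(Z)
    have hsumY : ∑ t ∈ Finset.range P.size,
        ((P.Aset_finite (n - P.ell t)).toFinset.card : ℝ) * y t
        = f n * ((P.Aset_finite n).toFinset.card : ℝ) := by
      have hterm : ∀ t ∈ Finset.range P.size,
          ((P.Aset_finite (n - P.ell t)).toFinset.card : ℝ) * y t
            = (((P.Aset_finite (n - P.ell t)).toFinset.card : ℝ) * t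
                + ∑ l ∈ (P.Aset_finite (n - P.ell t)).toFinset, ((l.sum : ℝ)))
              - (a * n + b) * ((P.Aset_finite (n - P.ell t)).toFinset.card : ℝ) := by
        intro t htmem
        obtain ⟨he1, he2⟩ := hellb t htmem
        have hEt := hEKfin (n - P.ell t) (by omega)
        rw [hEt, hydef]
        have hcast : ((n - P.ell t : ℕ) : ℝ) = (n : ℝ) - (P.ell t : ℝ) := by
          push_cast [Nat.cast_sub (by omega : P.ell t ≤ n)]
          ring
        rw [hcast]
        ring
      rw [Finset.sum_congr rfl hterm, Finset.sum_sub_distrib, ← hSK, ← Finset.mul_sum,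
        ← hcard, hEKfin n (by omega)]
      ring
    -- variance formula
    have hMpos : 0 < ((P.Aset_finite n).toFinset.card : ℝ) := by
      exact_mod_cast P.cardA_pos hnd n (by omega)
    have hvar : varOn (P.Omega n)
        (fun l => (P.Z l : ℝ) + f (n - P.Lfn l) - a * (P.Lfn l : ℝ))
        = (∑ t ∈ Finset.range P.size,
            ((P.Aset_finite (n - P.ell t)).toFinset.card : ℝ) * (y t) ^ 2)
          / ((P.Aset_finite n).toFinset.card : ℝ) - (f n) ^ 2 := by
      unfold varOn
      rw [P.Omega_eq_Aset hnd n (by omega)]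
      rw [expectOn_finite (P.Aset_finite n), expectOn_finite (P.Aset_finite n)]
      have hg1 : ∑ l ∈ (P.Aset_finite n).toFinset,
          ((P.Z l : ℝ) + f (n - P.Lfn l) - a * (P.Lfn l : ℝ)) ^ 2
          = ∑ t ∈ Finset.range P.size,
              ((P.Aset_finite (n - P.ell t)).toFinset.card : ℝ) * (y t) ^ 2 := by
        have := hfib (fun t => (y t) ^ 2)
        rw [← this]
        refine Finset.sum_congr rfl (fun l _ => ?_)
        rw [hYeq l]
      have hg2 : ∑ l ∈ (P.Aset_finite n).toFinset,
          ((P.Z l : ℝ) + f (n - P.Lfn l) - a * (P.Lfn l : ℝ))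
          = f n * ((P.Aset_finite n).toFinset.card : ℝ) := by
        have := hfib y
        rw [← hsumY, ← this]
        refine Finset.sum_congr rfl (fun l _ => ?_)
        rw [hYeq l]
      rw [hg1, hg2]
      congr 1
      rw [mul_div_assoc, div_self (ne_of_gt hMpos), mul_one]
    rw [hvar]
    -- lower bounds
    have hD0pos : 0 < ((P.Aset_finite (n - P.ell 0)).toFinset.card : ℝ) := by
      have h0S : 0 < P.size := hS1
      obtain ⟨he1, he2⟩ := hellb 0 (Finset.mem_range.mpr h0S)
      exact_mod_cast P.cardA_pos hnd (n - P.ell 0) (by omega)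
    have hDle : ∀ t ∈ Finset.range P.size,
        ((P.Aset_finite (n - P.ell t)).toFinset.card : ℝ)
          ≤ ((P.Aset_finite (n - P.ell 0)).toFinset.card : ℝ) := by
      intro t htmem
      obtain ⟨he1, he2⟩ := hellb t htmem
      have hz := P.ell_zero
      have := P.cardA_le (n - P.ell t) (n - P.ell 0) (by omega) (by omega)
      exact_mod_cast this
    have hMle : ((P.Aset_finite n).toFinset.card : ℝ)
        ≤ (P.size : ℝ) * ((P.Aset_finite (n - P.ell 0)).toFinset.card : ℝ) := by
      rw [hcard]
      calc ∑ t ∈ Finset.range P.size, ((P.Aset_finite (n - P.ell t)).toFinset.card : ℝ)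
          ≤ ∑ _t ∈ Finset.range P.size,
              ((P.Aset_finite (n - P.ell 0)).toFinset.card : ℝ) :=
            Finset.sum_le_sum hDle
        _ = (P.size : ℝ) * ((P.Aset_finite (n - P.ell 0)).toFinset.card : ℝ) := by
            rw [Finset.sum_const, nsmul_eq_mul, Finset.card_range]
    have hT2 : ((P.Aset_finite (n - P.ell 0)).toFinset.card : ℝ) * (y 0) ^ 2
        ≤ ∑ t ∈ Finset.range P.size,
            ((P.Aset_finite (n - P.ell t)).toFinset.card : ℝ) * (y t) ^ 2 := by
      refine Finset.single_le_sum (f := fun t =>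
        ((P.Aset_finite (n - P.ell t)).toFinset.card : ℝ) * (y t) ^ 2) ?_ ?_
      · intro t _
        positivity
      · exact Finset.mem_range.mpr hS1
    have hy0 : y 0 = f (n - 1) - a := by
      rw [hydef]
      simp only [P.ell_zero]
      push_cast
      ring
    -- epsilon bounds
    have hfn : |f n| < ε := by
      have := hN₀ n (by omega)
      rwa [Real.dist_eq, sub_zero] at this
    have hfn1 : |f (n - 1)| < ε := by
      have := hN₀ (n - 1) (by omega)
      rwa [Real.dist_eq, sub_zero] at this
    obtain ⟨hfna, hfnb⟩ := abs_lt.mp hfn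
    obtain ⟨hfn1a, hfn1b⟩ := abs_lt.mp hfn1
    -- key numeric inequality
    have hεa : 4 * ((P.size : ℝ) + 1) * ε = a := by
      rw [hεdef]
      field_simp
    have ha2 : a ^ 2 = 16 * ((P.size : ℝ) + 1) ^ 2 * ε ^ 2 := by
      rw [← hεa]; ring
    have h2aε : 2 * a * ε = 8 * ((P.size : ℝ) + 1) * ε ^ 2 := by
      rw [← hεa]; ring
    have hkey : a ^ 2 / 2 + (P.size : ℝ) * (f n) ^ 2 < (y 0) ^ 2 := by
      rw [hy0]
      have h1 : (f (n - 1) - a) ^ 2 ≥ a ^ 2 - 2 * a * ε := by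
        nlinarith [sq_nonneg (f (n - 1)), mul_pos ha (sub_pos.mpr hfn1b)]
      have h3 : 2 * a * ε ≤ a ^ 2 / 4 := by
        rw [h2aε, ha2]
        nlinarith [mul_nonneg (mul_nonneg (show (0:ℝ) ≤ (P.size : ℝ) + 1 by linarith)
          (sq_nonneg ε)) (show (0:ℝ) ≤ (P.size : ℝ) - 1 by linarith)]
      have h4 : (P.size : ℝ) * (f n) ^ 2 ≤ (P.size : ℝ) * ε ^ 2 := by
        have hfn2 : (f n) ^ 2 ≤ ε ^ 2 := by nlinarith
        exact mul_le_mul_of_nonneg_left hfn2 hSpos.le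
      have h5 : (P.size : ℝ) * ε ^ 2 ≤ a ^ 2 / 16 := by
        rw [ha2]
        have hpos : ((P.size : ℝ) ^ 2 + (P.size : ℝ) + 1) * ε ^ 2 ≥ 0 := by positivity
        nlinarith [hpos]
      have h6 : 0 < a ^ 2 := by positivity
      linarith [h1, h3, h4, h5, h6]
    -- final chain
    have hstep1 : (y 0) ^ 2 / (P.size : ℝ)
        ≤ (∑ t ∈ Finset.range P.size,
            ((P.Aset_finite (n - P.ell t)).toFinset.card : ℝ) * (y t) ^ 2)
          / ((P.Aset_finite n).toFinset.card : ℝ) := by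
      rw [div_le_div_iff₀ hSpos hMpos]
      have h1 : (y 0) ^ 2 * ((P.Aset_finite n).toFinset.card : ℝ)
          ≤ (y 0) ^ 2 * ((P.size : ℝ) * ((P.Aset_finite (n - P.ell 0)).toFinset.card : ℝ)) :=
        mul_le_mul_of_nonneg_left hMle (sq_nonneg (y 0))
      have h2 : ((P.Aset_finite (n - P.ell 0)).toFinset.card : ℝ) * (y 0) ^ 2 * (P.size : ℝ)
          ≤ (∑ t ∈ Finset.range P.size,
              ((P.Aset_finite (n - P.ell t)).toFinset.card : ℝ) * (y t) ^ 2) * (P.size : ℝ) :=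
        mul_le_mul_of_nonneg_right hT2 hSpos.le
      nlinarith [h1, h2]
    have hstep2 : a ^ 2 / (2 * (P.size : ℝ)) < (y 0) ^ 2 / (P.size : ℝ) - (f n) ^ 2 := by
      have h1 : a ^ 2 / (2 * (P.size : ℝ)) = (a ^ 2 / 2) / (P.size : ℝ) := by
        ring
      have h2 : (y 0) ^ 2 / (P.size : ℝ) - (f n) ^ 2
          = ((y 0) ^ 2 - (P.size : ℝ) * (f n) ^ 2) / (P.size : ℝ) := by
        field_simp
      rw [h1, h2]
      exact (div_lt_div_iff_of_pos_right hSpos).mpr (by linarith [hkey])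
    linarith [hstep1, hstep2]
end

section
/- Let {H_n} be a Positive Linear Recurrence Sequence with length L and size S. Suppose E[K_r] = a·r + b + f(r) for all r > L, where a, b are constants and f(r) → 0 as r → ∞. Define Y_n(ω) = Z_n(ω) + f(n − L_n(ω)) − a·L_n(ω) for n > 2L. Then Var[Y_n] − E[(Z_n − a·L_n)²] → 0 as n → ∞. -/
open scoped BigOperators
open Filter

open PLRS

namespace PLRSAux

open PLRS List Finset

variable (P : PLRS)

/-- partial sums of the coefficients -/
def cpref (s : ℕ) : ℕ := ∑ i ∈ Finset.Icc 1 s, P.c i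

/-- A type-2-shaped block. -/
def blockC (s a : ℕ) : List ℕ := ((List.range (s-1)).map fun i => P.c (i+1)) ++ [a]

/-- A type-1-shaped block. -/
def type1 (m : ℕ) : List ℕ := (List.range m).map fun i => P.c (i+1)

/-- A good block list: all blocks type 2 except the last, which is type 1 or type 2. -/
def Good (bs : List (List ℕ)) : Prop :=
  ∃ init lastb, bs = init ++ [lastb] ∧ (∀ b ∈ init, P.IsType2Block b) ∧
    (P.IsType1Block lastb ∨ P.IsType2Block lastb)

lemma icc_sum_eq_range (g : ℕ → ℕ) (k : ℕ) :
    ∑ i ∈ Finset.Icc 1 k, g i = ∑ i ∈ Finset.range k, g (i+1) := by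
  induction k with
  | zero => simp
  | succ k ih => rw [Finset.sum_Icc_succ_top (by omega), ih, Finset.sum_range_succ]

lemma cpref_mono : Monotone (cpref P) := by
  intro s t hst
  exact Finset.sum_le_sum_of_subset (Finset.Icc_subset_Icc_right hst)

lemma cpref_succ (s : ℕ) : cpref P (s+1) = cpref P s + P.c (s+1) := by
  rw [cpref, cpref, Finset.sum_Icc_succ_top (by omega)]

lemma cpref_zero : cpref P 0 = 0 := by simp [cpref]

lemma cpref_L : cpref P P.L = P.size := rfl

lemma length_blockC (s a : ℕ) (hs : 1 ≤ s) : (blockC P s a).length = s := by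
  simp [blockC]; omega

lemma blockC_ne_nil (s a : ℕ) : blockC P s a ≠ [] := by simp [blockC]

lemma length_type1 (m : ℕ) : (type1 P m).length = m := by simp [type1]

lemma sum_blockC (s a : ℕ) : (blockC P s a).sum = cpref P (s-1) + a := by
  have : ((List.range (s-1)).map fun i => P.c (i+1)).sum = ∑ i ∈ Finset.range (s-1), P.c (i+1) := rfl
  simp [blockC, cpref, icc_sum_eq_range, this]

lemma ell_eq (s a : ℕ) (hs1 : 1 ≤ s) (hsL : s ≤ P.L) (ha : a < P.c s) :
    P.ell (cpref P (s-1) + a) = s := by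
  set t := cpref P (s-1) + a with hT
  have hmem : s ∈ {s' : ℕ | t < ∑ i ∈ Finset.Icc 1 s', P.c i} := by
    have : cpref P s = cpref P (s-1) + P.c s := by
      have := cpref_succ P (s-1)
      rwa [Nat.sub_add_cancel hs1] at this
    show t < ∑ i ∈ Finset.Icc 1 s, P.c i
    show t < cpref P s
    omega
  refine le_antisymm (Nat.sInf_le hmem) (le_csInf ⟨s, hmem⟩ ?_)
  intro b hb
  by_contra hlt
  push_neg at hlt
  have hble : cpref P b ≤ cpref P (s-1) := cpref_mono P (by omega)
  have ht2 : t < cpref P b := hb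
  omega

lemma ell_spec (t : ℕ) (ht : t < P.size) :
    1 ≤ P.ell t ∧ P.ell t ≤ P.L ∧ cpref P (P.ell t - 1) ≤ t ∧ t < cpref P (P.ell t) := by
  have hLmem : P.L ∈ {s' : ℕ | t < ∑ i ∈ Finset.Icc 1 s', P.c i} := ht
  have hmem : P.ell t ∈ {s' : ℕ | t < ∑ i ∈ Finset.Icc 1 s', P.c i} :=
    Nat.sInf_mem ⟨P.L, hLmem⟩
  have h4 : t < cpref P (P.ell t) := hmem
  have hsize : t < cpref P P.L := ht
  have h2 : P.ell t ≤ P.L := Nat.sInf_le hLmem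
  have h1 : 1 ≤ P.ell t := by
    rcases Nat.eq_zero_or_pos (P.ell t) with h | h
    · exfalso; rw [h] at h4; rw [cpref_zero] at h4; omega
    · omega
  have h3 : cpref P (P.ell t - 1) ≤ t := by
    have hlt : P.ell t - 1 < P.ell t := by omega
    have : P.ell t - 1 ∉ {s' : ℕ | t < ∑ i ∈ Finset.Icc 1 s', P.c i} :=
      Nat.notMem_of_lt_sInf hlt
    have := fun h => this h
    by_contra hc
    push_neg at hc
    exact this hc
  exact ⟨h1, h2, h3, h4⟩

lemma type2Block_eq (t : ℕ) :
    P.type2Block t = blockC P (P.ell t) (t - cpref P (P.ell t - 1)) := rfl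

lemma sum_type2Block (t : ℕ) (ht : t < P.size) : (P.type2Block t).sum = t := by
  obtain ⟨h1, h2, h3, h4⟩ := ell_spec P t ht
  rw [type2Block_eq, sum_blockC]
  omega

lemma isType2Block_type2Block (t : ℕ) (ht : t < P.size) : P.IsType2Block (P.type2Block t) := by
  obtain ⟨h1, h2, h3, h4⟩ := ell_spec P t ht
  refine ⟨P.ell t, h1, h2, t - cpref P (P.ell t - 1), ?_, rfl⟩
  have : cpref P (P.ell t) = cpref P (P.ell t - 1) + P.c (P.ell t) := by
    have := cpref_succ P (P.ell t - 1)
    rwa [Nat.sub_add_cancel h1] at this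
  omega

/-- unique type-2 block with a given sum -/
lemma type2Block_sum_eq (b : List ℕ) (hb : P.IsType2Block b) : b = P.type2Block b.sum := by
  obtain ⟨s, hs1, hsL, a, ha, hbl⟩ := hb
  have hbl' : b = blockC P s a := hbl
  subst hbl'
  rw [sum_blockC, type2Block_eq, ell_eq P s a hs1 hsL ha]
  congr 1
  omega

/-! ### value lemmas -/

lemma value_nil : P.value [] = 0 := by simp [value]

lemma value_cons (x : ℕ) (l : List ℕ) :
    P.value (x :: l) = x * P.H (l.length + 1) + P.value l := by
  rw [value, value]
  simp only [List.length_cons]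
  rw [Finset.sum_range_succ']
  simp only [List.getD_cons_succ, List.getD_cons_zero, Nat.sub_zero]
  rw [add_comm]
  congr 1
  apply Finset.sum_congr rfl
  intro i hi
  have hx : l.length + 1 - (i + 1) = l.length - i := by omega
  rw [hx]

lemma value_append (u v : List ℕ) :
    P.value (u ++ v) =
      (∑ i ∈ Finset.range u.length, u.getD i 0 * P.H (u.length + v.length - i)) + P.value v := by
  induction u with
  | nil => simp [value_nil]
  | cons x u ih =>
    rw [List.cons_append, value_cons, ih]
    simp only [List.length_cons]
    rw [Finset.sum_range_succ']
    simp only [List.getD_cons_succ, List.getD_cons_zero, Nat.sub_zero]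
    have h1 : (u ++ v).length + 1 = u.length + 1 + v.length := by simp; omega
    rw [h1, ← add_assoc, add_comm (x * P.H (u.length + 1 + v.length))]
    congr 2
    apply Finset.sum_congr rfl
    intro i hi
    have hx : u.length + 1 + v.length - (i + 1) = u.length + v.length - i := by omega
    rw [hx]

lemma headI_append (u v : List ℕ) (hu : u ≠ []) : (u ++ v).headI = u.headI := by
  cases u with
  | nil => simp at hu
  | cons x l => simp

lemma value_ge (l : List ℕ) (hl : 0 < l.headI) : P.H l.length ≤ P.value l := by
  cases l with
  | nil => simp at hl
  | cons x tl =>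
    rw [value_cons]
    simp only [List.headI] at hl
    calc P.H (x :: tl).length = 1 * P.H (tl.length + 1) := by simp
    _ ≤ x * P.H (tl.length + 1) := Nat.mul_le_mul_right _ hl
    _ ≤ _ := Nat.le_add_right _ _

lemma getD_cprefix (k i : ℕ) (hi : i < k) :
    ((List.range k).map fun j => P.c (j+1)).getD i 0 = P.c (i+1) := by
  rw [List.getD_eq_getElem _ _ (by simpa using hi)]
  simp

lemma sum_split (k m : ℕ) (hk : 1 ≤ k) :
    ∑ j ∈ Finset.range k, P.c (j+1) * P.H (m - j)
      = (∑ j ∈ Finset.range (k-1), P.c (j+1) * P.H (m - j)) + P.c k * P.H (m - (k-1)) := by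
  obtain ⟨k', rfl⟩ : ∃ k', k = k' + 1 := ⟨k-1, by omega⟩
  rw [Finset.sum_range_succ]
  simp

/-- key inequality: partial recurrence sums are at most `H (m+1)` -/
lemma key_ineq (s m : ℕ) (hsL : s ≤ P.L) (hsm : s ≤ m) (hm : 1 ≤ m) :
    ∑ j ∈ Finset.range s, P.c (j+1) * P.H (m - j) ≤ P.H (m+1) := by
  have conv : ∀ k, ∑ i ∈ Finset.Icc 1 k, P.c i * P.H (m + 1 - i)
      = ∑ j ∈ Finset.range k, P.c (j+1) * P.H (m - j) := by
    intro k
    rw [icc_sum_eq_range]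
    apply Finset.sum_congr rfl
    intro i _
    congr 2
    omega
  rcases le_or_gt P.L m with hLm | hmL
  · rw [P.H_rec m hLm, conv]
    apply Finset.sum_le_sum_of_subset
    exact Finset.range_subset_range.2 hsL
  · rw [P.H_init m hm hmL, conv]
    have : ∑ j ∈ Finset.range s, P.c (j+1) * P.H (m - j)
        ≤ ∑ j ∈ Finset.range m, P.c (j+1) * P.H (m - j) :=
      Finset.sum_le_sum_of_subset (Finset.range_subset_range.2 hsm)
    omega

lemma value_blockC_append (s a : ℕ) (hs : 1 ≤ s) (rest : List ℕ) :
    P.value (blockC P s a ++ rest) =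
      (∑ i ∈ Finset.range (s-1), P.c (i+1) * P.H (s + rest.length - i))
        + a * P.H (rest.length + 1) + P.value rest := by
  have h2 : blockC P s a ++ rest
      = ((List.range (s-1)).map fun i => P.c (i+1)) ++ (a :: rest) := by
    simp [blockC]
  rw [h2, value_append]
  rw [value_cons]
  have hlen : ((List.range (s-1)).map fun i => P.c (i+1)).length = s - 1 := by simp
  rw [hlen, add_assoc]
  congr 1
  apply Finset.sum_congr rfl
  intro i hi
  simp only [Finset.mem_range] at hi
  rw [getD_cprefix P _ _ hi]
  congr 2
  simp
  omega

/-- value of a legal sequence is less than `H (length + 1)` -/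
lemma value_lt (l : List ℕ) (h : P.IsLegal l) : P.value l < P.H (l.length + 1) := by
  induction h with
  | cond1 m h1 h2 =>
    have hlen : ((List.range m).map fun i => P.c (i+1)).length = m := by simp
    rw [hlen]
    have hval : P.value ((List.range m).map fun i => P.c (i+1))
        = ∑ j ∈ Finset.range m, P.c (j+1) * P.H (m - j) := by
      rw [value, hlen]
      apply Finset.sum_congr rfl
      intro i hi
      simp only [Finset.mem_range] at hi
      rw [getD_cprefix P _ _ hi]
    rw [hval]
    rw [P.H_init m h1 h2, icc_sum_eq_range]
    have : ∀ i ∈ Finset.range m, P.c (i+1) * P.H (m + 1 - (i+1)) = P.c (i+1) * P.H (m - i) := by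
      intro i _; congr 2; omega
    rw [Finset.sum_congr rfl this]
    omega
  | cond2 s hs1 hs2 a ha rest hrest ih =>
    have hbl : ((List.range (s-1)).map fun i => P.c (i+1)) ++ a :: rest
        = blockC P s a ++ rest := by simp [blockC]
    rw [hbl, value_blockC_append P s a hs1 rest]
    have hlen : (blockC P s a ++ rest).length = s + rest.length := by
      simp [length_blockC P s a hs1]
    rw [hlen]
    set m := s + rest.length with hm
    have key := key_ineq P s m hs2 (by omega) (by omega)
    have hsplit : ∑ j ∈ Finset.range s, P.c (j+1) * P.H (m - j)
        = (∑ j ∈ Finset.range (s-1), P.c (j+1) * P.H (m - j)) + P.c s * P.H (rest.length + 1) := by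
      rw [sum_split P s m hs1]
      have hx : m - (s-1) = rest.length + 1 := by omega
      rw [hx]
    have hrest' : P.value rest < P.H (rest.length + 1) := ih
    have : a * P.H (rest.length + 1) + P.value rest < P.c s * P.H (rest.length + 1) := by
      calc a * P.H (rest.length + 1) + P.value rest
          < a * P.H (rest.length + 1) + P.H (rest.length + 1) := by omega
      _ = (a + 1) * P.H (rest.length + 1) := by ring
      _ ≤ P.c s * P.H (rest.length + 1) := Nat.mul_le_mul_right _ (by omega)
    omega
  | cond2_last s hs1 hs2 a ha =>
    have hbl : ((List.range (s-1)).map fun i => P.c (i+1)) ++ [a]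
        = blockC P s a ++ [] := by simp [blockC]
    rw [hbl, value_blockC_append P s a hs1 []]
    have hlen : (blockC P s a ++ []).length = s := by
      simp [length_blockC P s a hs1]
    rw [hlen]
    simp only [List.length_nil, value_nil, add_zero, Nat.zero_add]
    have key := key_ineq P s s hs2 le_rfl (by omega)
    have hsplit : ∑ j ∈ Finset.range s, P.c (j+1) * P.H (s - j)
        = (∑ j ∈ Finset.range (s-1), P.c (j+1) * P.H (s - j)) + P.c s * P.H 1 := by
      rw [sum_split P s s hs1]
      have hx : s - (s-1) = 1 := by omega
      rw [hx]
    have h1 : P.H 1 = 1 := P.H_one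
    have hlast : a * P.H 1 < P.c s * P.H 1 := by
      rw [h1]; omega
    omega

/-! ### firstMismatch and blocks -/

lemma blocks_nil : P.blocks [] = [] := by rw [PLRS.blocks]; simp

lemma blocks_of_none (l : List ℕ) (h : l ≠ []) (h2 : P.firstMismatch l = none) :
    P.blocks l = [l] := by
  rw [PLRS.blocks]; simp [h, h2]

lemma blocks_of_some (l : List ℕ) (i : ℕ) (h : l ≠ []) (h2 : P.firstMismatch l = some i) :
    P.blocks l = l.take (i+1) :: P.blocks (l.drop (i+1)) := by
  rw [PLRS.blocks]; simp [h, h2]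

lemma getD_prefix_append (k : ℕ) (v : List ℕ) (i : ℕ) (hi : i < k) :
    (((List.range k).map fun j => P.c (j+1)) ++ v).getD i 0 = P.c (i+1) := by
  rw [List.getD_append _ _ _ _ (by simpa using hi)]
  exact getD_cprefix P k i hi

lemma getD_prefix_append_self (k x : ℕ) (v : List ℕ) :
    (((List.range k).map fun j => P.c (j+1)) ++ x :: v).getD k 0 = x := by
  rw [List.getD_eq_getElem _ _ (by simp)]
  rw [List.getElem_append_right (by simp)]
  simp

lemma firstMismatch_type1 (m : ℕ) : P.firstMismatch (type1 P m) = none := by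
  rw [PLRS.firstMismatch, List.find?_eq_none]
  intro i hi
  rw [length_type1, List.mem_range] at hi
  have h := getD_cprefix P m i hi
  simp only [type1]
  rw [h]
  simp

lemma firstMismatch_blockC (s a : ℕ) (hs : 1 ≤ s) (ha : a ≠ P.c s) (rest : List ℕ) :
    P.firstMismatch (blockC P s a ++ rest) = some (s-1) := by
  obtain ⟨s', rfl⟩ : ∃ s', s = s' + 1 := ⟨s-1, by omega⟩
  have hpre : blockC P (s'+1) a ++ rest
      = ((List.range s').map fun j => P.c (j+1)) ++ (a :: rest) := by
    simp [blockC]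
  rw [PLRS.firstMismatch]
  have hlen : (blockC P (s'+1) a ++ rest).length = (s' + 1) + rest.length := by
    simp [blockC]
    omega
  rw [hlen, List.range_add, List.find?_append]
  have h1 : (List.range (s'+1)).find?
      (fun i => (blockC P (s'+1) a ++ rest).getD i 0 != P.c (i+1)) = some s' := by
    rw [List.range_succ, List.find?_append]
    have hnone : (List.range s').find?
        (fun i => (blockC P (s'+1) a ++ rest).getD i 0 != P.c (i+1)) = none := by
      rw [List.find?_eq_none]
      intro i hi
      rw [List.mem_range] at hi
      rw [hpre]
      rw [getD_prefix_append P s' (a :: rest) i hi]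
      simp
    rw [hnone]
    have hps : ((blockC P (s'+1) a ++ rest).getD s' 0 != P.c (s'+1)) = true := by
      rw [hpre, getD_prefix_append_self]
      simpa using ha
    simp only [List.find?_cons, List.find?_nil]
    simp only [List.getD] at hps ⊢
    rw [hps]
    simp
  rw [h1]
  simp

lemma blocks_type1 (m : ℕ) (hm : 1 ≤ m) : P.blocks (type1 P m) = [type1 P m] := by
  apply blocks_of_none
  · simp [type1]
    omega
  · exact firstMismatch_type1 P m

lemma blocks_blockC_append (s a : ℕ) (hs : 1 ≤ s) (ha : a < P.c s) (rest : List ℕ) :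
    P.blocks (blockC P s a ++ rest) = blockC P s a :: P.blocks rest := by
  have hne : blockC P s a ++ rest ≠ [] := by simp [blockC]
  rw [blocks_of_some P _ (s-1) hne (firstMismatch_blockC P s a hs (by omega) rest)]
  have hs1 : s - 1 + 1 = s := by omega
  rw [hs1]
  rw [List.take_left' (length_blockC P s a hs), List.drop_left' (length_blockC P s a hs)]

/-- The blocks of a flatten of a good block list are that block list. -/
lemma blocks_flatten (bs : List (List ℕ)) (h : Good P bs) : P.blocks bs.flatten = bs := by
  obtain ⟨init, lastb, rfl, h2, hlast⟩ := h
  induction init with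
  | nil =>
    simp only [List.nil_append, List.flatten_cons, List.flatten_nil, List.append_nil]
    rcases hlast with ⟨m, hm1, hmL, rfl⟩ | ⟨s, hs1, hsL, aa, ha, rfl⟩
    · exact blocks_type1 P m hm1
    · have : ((List.range (s-1)).map fun i => P.c (i+1)) ++ [aa] = blockC P s aa ++ [] := by
        simp [blockC]
      rw [this, blocks_blockC_append P s aa hs1 ha, blocks_nil]
      simp
  | cons b init ih =>
    have hb : P.IsType2Block b := h2 b (by simp)
    obtain ⟨s, hs1, hsL, aa, ha, rfl⟩ := hb
    have h2' : ∀ x ∈ init, P.IsType2Block x := fun x hx => h2 x (by simp [hx])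
    rw [List.cons_append]
    have : ((((List.range (s-1)).map fun i => P.c (i+1)) ++ [aa]) :: (init ++ [lastb])).flatten
        = blockC P s aa ++ (init ++ [lastb]).flatten := by
      simp [blockC]
    rw [this, blocks_blockC_append P s aa hs1 ha, ih h2']
    simp [blockC]

/-! ### legality and good block lists -/

lemma type2_ne_nil (b : List ℕ) (hb : P.IsType2Block b) : b ≠ [] := by
  obtain ⟨s, _, _, aa, _, rfl⟩ := hb; simp

lemma block_ne_nil (b : List ℕ) (hb : P.IsType1Block b ∨ P.IsType2Block b) : b ≠ [] := by
  rcases hb with ⟨m, hm1, _, rfl⟩ | hb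
  · simp; omega
  · exact type2_ne_nil P b hb

lemma block_length_le (b : List ℕ) (hb : P.IsType1Block b ∨ P.IsType2Block b) :
    b.length ≤ P.L := by
  rcases hb with ⟨m, hm1, hm2, rfl⟩ | ⟨s, hs1, hs2, aa, _, rfl⟩
  · simp; omega
  · simp; omega

lemma legal_iff_good (l : List ℕ) : P.IsLegal l ↔ ∃ bs, Good P bs ∧ bs.flatten = l := by
  constructor
  · intro h
    induction h with
    | cond1 m h1 h2 =>
      exact ⟨[type1 P m], ⟨[], type1 P m, rfl, by simp, Or.inl ⟨m, h1, h2, rfl⟩⟩, by simp [type1]⟩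
    | cond2 s hs1 hs2 a ha rest hrest ih =>
      obtain ⟨bs, ⟨init, lastb, rfl, hinit, hlast⟩, hfl⟩ := ih
      refine ⟨blockC P s a :: (init ++ [lastb]),
        ⟨blockC P s a :: init, lastb, by simp, ?_, hlast⟩, ?_⟩
      · intro x hx
        rcases List.mem_cons.1 hx with rfl | hx
        · exact ⟨s, hs1, hs2, a, ha, rfl⟩
        · exact hinit x hx
      · simp only [List.flatten_cons, hfl]
        simp [blockC]
    | cond2_last s hs1 hs2 a ha =>
      exact ⟨[blockC P s a], ⟨[], blockC P s a, rfl, by simp,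
        Or.inr ⟨s, hs1, hs2, a, ha, rfl⟩⟩, by simp [blockC]⟩
  · rintro ⟨bs, ⟨init, lastb, rfl, hinit, hlast⟩, rfl⟩
    induction init with
    | nil =>
      simp only [List.nil_append, List.flatten_cons, List.flatten_nil, List.append_nil]
      rcases hlast with ⟨m, hm1, hm2, rfl⟩ | ⟨s, hs1, hs2, aa, ha, rfl⟩
      · exact IsLegal.cond1 m hm1 hm2
      · exact IsLegal.cond2_last s hs1 hs2 aa ha
    | cons b init ih =>
      obtain ⟨s, hs1, hs2, aa, ha, rfl⟩ := hinit b (by simp)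
      have hrest := ih (fun x hx => hinit x (by simp [hx]))
      rw [List.cons_append, List.flatten_cons]
      have : (((List.range (s-1)).map fun i => P.c (i+1)) ++ [aa]) ++ (init ++ [lastb]).flatten
          = ((List.range (s-1)).map fun i => P.c (i+1)) ++ (aa :: (init ++ [lastb]).flatten) := by
        simp
      rw [this]
      exact IsLegal.cond2 s hs1 hs2 aa ha _ hrest

lemma good_blocks (l : List ℕ) (h : P.IsLegal l) :
    Good P (P.blocks l) ∧ (P.blocks l).flatten = l := by
  obtain ⟨bs, hg, rfl⟩ := (legal_iff_good P _).1 h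
  rw [blocks_flatten P bs hg]
  exact ⟨hg, rfl⟩

lemma good_flatten_length_le (bs : List (List ℕ)) (h : Good P bs) :
    bs.flatten.length ≤ bs.length * P.L := by
  obtain ⟨init, lastb, rfl, hinit, hlast⟩ := h
  rw [List.length_flatten]
  have hle : ∀ x ∈ (init ++ [lastb]).map List.length, x ≤ P.L := by
    intro x hx
    rw [List.mem_map] at hx
    obtain ⟨b, hb, rfl⟩ := hx
    rcases List.mem_append.1 hb with hb | hb
    · exact block_length_le P b (Or.inr (hinit b hb))
    · rw [List.mem_singleton] at hb; subst hb
      exact block_length_le P b hlast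
  calc ((init ++ [lastb]).map List.length).sum
      ≤ ((init ++ [lastb]).map List.length).length • P.L := List.sum_le_card_nsmul _ _ hle
    _ = (init ++ [lastb]).length * P.L := by simp [smul_eq_mul]

lemma c_le_size (i : ℕ) (h1 : 1 ≤ i) (h2 : i ≤ P.L) : P.c i ≤ P.size :=
  Finset.single_le_sum (f := P.c) (fun _ _ => Nat.zero_le _) (Finset.mem_Icc.2 ⟨h1, h2⟩)

lemma legal_entry_le (l : List ℕ) (h : P.IsLegal l) : ∀ x ∈ l, x ≤ P.size := by
  induction h with
  | cond1 m h1 h2 =>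
    intro x hx
    rw [List.mem_map] at hx
    obtain ⟨i, hi, rfl⟩ := hx
    rw [List.mem_range] at hi
    exact c_le_size P (i+1) (by omega) (by omega)
  | cond2 s hs1 hs2 a ha rest hrest ih =>
    intro x hx
    rcases List.mem_append.1 hx with hx | hx
    · rw [List.mem_map] at hx
      obtain ⟨i, hi, rfl⟩ := hx
      rw [List.mem_range] at hi
      exact c_le_size P (i+1) (by omega) (by omega)
    · rcases List.mem_cons.1 hx with rfl | hx
      · exact le_trans (le_of_lt ha) (c_le_size P s hs1 hs2)
      · exact ih x hx
  | cond2_last s hs1 hs2 a ha =>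
    intro x hx
    rcases List.mem_append.1 hx with hx | hx
    · rw [List.mem_map] at hx
      obtain ⟨i, hi, rfl⟩ := hx
      rw [List.mem_range] at hi
      exact c_le_size P (i+1) (by omega) (by omega)
    · rw [List.mem_singleton] at hx; subst hx
      exact le_trans (le_of_lt ha) (c_le_size P s hs1 hs2)

lemma finite_bounded (B n : ℕ) : {l : List ℕ | l.length = n ∧ ∀ x ∈ l, x ≤ B}.Finite := by
  induction n with
  | zero =>
    apply Set.Finite.subset (Set.finite_singleton ([] : List ℕ))
    rintro l ⟨hl, -⟩
    rw [List.length_eq_zero_iff] at hl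
    simp [hl]
  | succ n ih =>
    apply Set.Finite.subset (Set.Finite.image2 List.cons (Set.finite_Iic B) ih)
    rintro l ⟨hl, hb⟩
    obtain ⟨x, t, rfl⟩ := List.exists_cons_of_ne_nil (l := l) (by rw [← List.length_pos_iff, hl]; omega)
    exact ⟨x, hb x (by simp), t, ⟨by simpa using hl, fun y hy => hb y (by simp [hy])⟩, rfl⟩

lemma legal_length_finite (n : ℕ) : {l : List ℕ | P.LegalDecomp l ∧ l.length = n}.Finite := by
  apply Set.Finite.subset (finite_bounded (P.size) n)
  rintro l ⟨⟨hleg, -⟩, hlen⟩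
  exact ⟨hlen, legal_entry_le P l hleg⟩

/-! ### monotonicity of H -/

lemma H_succ_lt (hnd : 2 ≤ P.L ∨ 2 ≤ P.c 1) (n : ℕ) (hn : 1 ≤ n) : P.H n < P.H (n+1) := by
  rcases lt_or_ge n P.L with h | h
  · rw [P.H_init n hn h]
    have h1 : P.c 1 * P.H (n + 1 - 1) ≤ ∑ i ∈ Finset.Icc 1 n, P.c i * P.H (n+1-i) :=
      Finset.single_le_sum (f := fun i => P.c i * P.H (n+1-i))
        (fun _ _ => Nat.zero_le _) (Finset.mem_Icc.2 ⟨le_refl 1, hn⟩)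
    have h2 : P.H n ≤ P.c 1 * P.H (n + 1 - 1) := by
      have : n + 1 - 1 = n := by omega
      rw [this]
      have := P.c1_pos
      calc P.H n = 1 * P.H n := (one_mul _).symm
      _ ≤ P.c 1 * P.H n := Nat.mul_le_mul_right _ this
    omega
  · rw [P.H_rec n h]
    rcases hnd with hL | hc
    · have hpair : P.c 1 * P.H (n+1-1) + P.c P.L * P.H (n+1-P.L)
          ≤ ∑ i ∈ Finset.Icc 1 P.L, P.c i * P.H (n+1-i) := by
        have hsub : ({1, P.L} : Finset ℕ) ⊆ Finset.Icc 1 P.L := by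
          intro x hx
          rcases Finset.mem_insert.1 hx with rfl | hx
          · exact Finset.mem_Icc.2 ⟨le_refl 1, P.L_pos⟩
          · rw [Finset.mem_singleton] at hx; subst hx
            exact Finset.mem_Icc.2 ⟨P.L_pos, le_refl _⟩
        calc P.c 1 * P.H (n+1-1) + P.c P.L * P.H (n+1-P.L)
            = ∑ i ∈ ({1, P.L} : Finset ℕ), P.c i * P.H (n+1-i) :=
              (Finset.sum_pair (f := fun i => P.c i * P.H (n+1-i)) (show (1:ℕ) ≠ P.L by omega)).symm
          _ ≤ _ := Finset.sum_le_sum_of_subset hsub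
      have h2 : P.H n ≤ P.c 1 * P.H (n+1-1) := by
        have hx : n + 1 - 1 = n := by omega
        rw [hx]
        have := P.c1_pos
        calc P.H n = 1 * P.H n := (one_mul _).symm
        _ ≤ P.c 1 * P.H n := Nat.mul_le_mul_right _ this
      have h3 : 1 ≤ P.c P.L * P.H (n+1-P.L) := by
        have hH := P.H_pos (n+1-P.L) (by omega)
        have hc := P.cL_pos
        exact Nat.one_le_iff_ne_zero.2 (by positivity)
      omega
    · have h1 : P.c 1 * P.H (n+1-1) ≤ ∑ i ∈ Finset.Icc 1 P.L, P.c i * P.H (n+1-i) :=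
        Finset.single_le_sum (f := fun i => P.c i * P.H (n+1-i))
          (fun _ _ => Nat.zero_le _) (Finset.mem_Icc.2 ⟨le_refl 1, P.L_pos⟩)
      have hx : n + 1 - 1 = n := by omega
      rw [hx] at h1
      have hH := P.H_pos n hn
      have h2 : 2 * P.H n ≤ P.c 1 * P.H n := Nat.mul_le_mul_right _ hc
      omega
  
lemma H_mono (hnd : 2 ≤ P.L ∨ 2 ≤ P.c 1) {m n : ℕ} (hm : 1 ≤ m) (hmn : m ≤ n) :
    P.H m ≤ P.H n := by
  induction n with
  | zero => omega
  | succ n ih =>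
    rcases Nat.lt_or_ge m (n+1) with h | h
    · have h1 := ih (by omega)
      have h2 := H_succ_lt P hnd n (by omega)
      omega
    · have : m = n + 1 := by omega
      rw [this]

lemma H_strict (hnd : 2 ≤ P.L ∨ 2 ≤ P.c 1) {m n : ℕ} (hm : 1 ≤ m) (hmn : m < n) :
    P.H m < P.H n :=
  lt_of_lt_of_le (H_succ_lt P hnd m hm) (H_mono P hnd (by omega) (by omega))

lemma length_pos_of_head (l : List ℕ) (h : 0 < l.headI) : 1 ≤ l.length := by
  cases l with
  | nil => simp at h
  | cons x t => simp

lemma omega_eq (hnd : 2 ≤ P.L ∨ 2 ≤ P.c 1) (n : ℕ) (hn : 1 ≤ n) :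
    P.Omega n = {l | P.LegalDecomp l ∧ l.length = n} := by
  ext l
  constructor
  · rintro ⟨hld, hlo, hhi⟩
    refine ⟨hld, ?_⟩
    have h1 : P.H l.length ≤ P.value l := value_ge P l hld.2
    have h2 : P.value l < P.H (l.length + 1) := value_lt P l hld.1
    have hlen1 : 1 ≤ l.length := length_pos_of_head l hld.2
    by_contra hne
    rcases lt_or_gt_of_ne hne with hlt | hgt
    · have : P.H (l.length + 1) ≤ P.H n := H_mono P hnd (by omega) (by omega)
      omega
    · have : P.H (n + 1) ≤ P.H l.length := H_mono P hnd (by omega) (by omega)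
      omega
  · rintro ⟨hld, rfl⟩
    exact ⟨hld, value_ge P l hld.2, value_lt P l hld.1⟩

/-! ### stlBlock / removeSTL / insertSTL computations -/

lemma good_split_two (bs : List (List ℕ)) (hg : Good P bs) (h2 : 2 ≤ bs.length) :
    ∃ front b lastb, bs = front ++ [b, lastb] ∧ (∀ x ∈ front, P.IsType2Block x) ∧
      P.IsType2Block b ∧ (P.IsType1Block lastb ∨ P.IsType2Block lastb) := by
  obtain ⟨init, lastb, rfl, hinit, hlast⟩ := hg
  rcases List.eq_nil_or_concat init with rfl | ⟨front, b, rfl⟩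
  · simp at h2
  · refine ⟨front, b, lastb, by simp, fun x hx => hinit x (by simp [hx]),
      hinit b (by simp), hlast⟩

lemma blocks_count (l : List ℕ) (h : P.IsLegal l) (k : ℕ) (hk : k * P.L < l.length) :
    k < (P.blocks l).length := by
  obtain ⟨hg, hfl⟩ := good_blocks P l h
  have h1 := good_flatten_length_le P _ hg
  rw [hfl] at h1
  by_contra h'
  push_neg at h'
  have : (P.blocks l).length * P.L ≤ k * P.L := Nat.mul_le_mul_right _ h'
  omega

lemma stlBlock_eq (l : List ℕ) (front : List (List ℕ)) (b lastb : List ℕ)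
    (hb : P.blocks l = front ++ [b, lastb]) : P.stlBlock l = b := by
  rw [PLRS.stlBlock, hb]
  simp

lemma removeSTL_eq (l : List ℕ) (front : List (List ℕ)) (b lastb : List ℕ)
    (hb : P.blocks l = front ++ [b, lastb]) :
    P.removeSTL l = (front ++ [lastb]).flatten := by
  rw [PLRS.removeSTL, hb]
  have h1 : (front ++ [b, lastb]).reverse = lastb :: b :: front.reverse := by simp
  rw [h1, List.eraseIdx_cons_succ, List.eraseIdx_cons_zero]
  congr 1
  simp

lemma insertSTL_eq (t : ℕ) (l : List ℕ) (init : List (List ℕ)) (lastb : List ℕ)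
    (hb : P.blocks l = init ++ [lastb]) :
    P.insertSTL t l = (init ++ [P.type2Block t, lastb]).flatten := by
  rw [PLRS.insertSTL, hb]
  have h1 : (init ++ [lastb]).reverse = lastb :: init.reverse := by simp
  rw [h1]
  have h2 : (lastb :: init.reverse).insertIdx 1 (P.type2Block t)
      = lastb :: P.type2Block t :: init.reverse := by simp
  rw [h2]
  congr 1
  simp

lemma headI_flatten_cons (b : List ℕ) (hbne : b ≠ []) (bs : List (List ℕ)) :
    ((b :: bs).flatten).headI = b.headI := by
  rw [List.flatten_cons]
  exact headI_append _ _ hbne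

lemma type2_sum_lt (b : List ℕ) (hb : P.IsType2Block b) : b.sum < P.size := by
  obtain ⟨s, hs1, hsL, aa, ha, hbeq⟩ := hb
  have hbeq' : b = blockC P s aa := hbeq
  subst hbeq'
  rw [sum_blockC]
  have h1 : cpref P s = cpref P (s-1) + P.c s := by
    have := cpref_succ P (s-1)
    rwa [Nat.sub_add_cancel hs1] at this
  have h2 : cpref P s ≤ P.size := by rw [← cpref_L]; exact cpref_mono P hsL
  omega

lemma length_type2Block (t : ℕ) (ht : t < P.size) : (P.type2Block t).length = P.ell t := by
  obtain ⟨h1, h2, h3, h4⟩ := ell_spec P t ht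
  rw [type2Block_eq]
  exact length_blockC P _ _ h1

/-- forward: inserting a type-2 block of size `t` before the last block -/
lemma insert_props (t : ℕ) (ht : t < P.size) (l' : List ℕ) (hleg : P.IsLegal l')
    (hlen : P.L < l'.length) :
    P.IsLegal (P.insertSTL t l') ∧ (P.insertSTL t l').headI = l'.headI ∧
    (P.insertSTL t l').length = l'.length + P.ell t ∧
    P.Z (P.insertSTL t l') = t ∧
    ((P.insertSTL t l').sum : ℕ) = l'.sum + t ∧
    P.removeSTL (P.insertSTL t l') = l' := by
  obtain ⟨hg, hfl⟩ := good_blocks P l' hleg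
  have hcount : 1 < (P.blocks l').length := by
    apply blocks_count P l' hleg 1
    omega
  obtain ⟨front, b, lastb, hbs, hfront, hb, hlast⟩ := good_split_two P _ hg (by omega)
  have hbtb : P.IsType2Block (P.type2Block t) := isType2Block_type2Block P t ht
  have hins : P.insertSTL t l' = (front ++ [b, P.type2Block t, lastb]).flatten := by
    rw [insertSTL_eq P t l' (front ++ [b]) lastb (by rw [hbs]; simp)]
    simp
  have hgood : Good P (front ++ [b, P.type2Block t, lastb]) := by
    refine ⟨front ++ [b, P.type2Block t], lastb, by simp, ?_, hlast⟩
    intro x hx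
    rcases List.mem_append.1 hx with hx | hx
    · exact hfront x hx
    · rcases List.mem_cons.1 hx with rfl | hx
      · exact hb
      · rw [List.mem_singleton] at hx; subst hx; exact hbtb
  have hflold : (front ++ [b, lastb]).flatten = l' := by rw [← hbs]; exact hfl
  have hblocksnew : P.blocks (P.insertSTL t l') = front ++ [b, P.type2Block t, lastb] := by
    rw [hins]; exact blocks_flatten P _ hgood
  refine ⟨?_, ?_, ?_, ?_, ?_, ?_⟩
  · rw [hins]; exact (legal_iff_good P _).2 ⟨_, hgood, rfl⟩
  · rw [hins, ← hflold]
    cases front with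
    | nil =>
      simp only [List.nil_append]
      rw [headI_flatten_cons b (type2_ne_nil P b hb), headI_flatten_cons b (type2_ne_nil P b hb)]
    | cons f0 fr =>
      have hf0 : P.IsType2Block f0 := hfront f0 (by simp)
      rw [List.cons_append, List.cons_append,
        headI_flatten_cons f0 (type2_ne_nil P f0 hf0), headI_flatten_cons f0 (type2_ne_nil P f0 hf0)]
  · rw [hins, ← hflold, List.length_flatten, List.length_flatten]
    simp only [List.map_append, List.sum_append, List.map_cons, List.sum_cons]
    rw [length_type2Block P t ht]
    simp
    omega
  · rw [PLRS.Z, stlBlock_eq P _ (front ++ [b]) (P.type2Block t) lastb (by rw [hblocksnew]; simp)]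
    exact sum_type2Block P t ht
  · rw [hins, ← hflold, List.sum_flatten, List.sum_flatten]
    simp only [List.map_append, List.sum_append, List.map_cons, List.sum_cons]
    rw [sum_type2Block P t ht]
    omega
  · rw [removeSTL_eq P _ (front ++ [b]) (P.type2Block t) lastb (by rw [hblocksnew]; simp)]
    rw [← hflold]
    simp

/-- backward: removing the second-to-last block -/
lemma remove_props (l : List ℕ) (hleg : P.IsLegal l) (hlen : 2 * P.L < l.length) :
    P.Z l < P.size ∧
    P.IsLegal (P.removeSTL l) ∧ (P.removeSTL l).headI = l.headI ∧
    (P.removeSTL l).length = l.length - P.ell (P.Z l) ∧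
    P.ell (P.Z l) ≤ P.L ∧ 1 ≤ P.ell (P.Z l) ∧
    ((l.sum : ℕ) = (P.removeSTL l).sum + P.Z l) ∧
    P.insertSTL (P.Z l) (P.removeSTL l) = l := by
  obtain ⟨hg, hfl⟩ := good_blocks P l hleg
  have hL := P.L_pos
  have hcount : 2 < (P.blocks l).length := by
    apply blocks_count P l hleg 2
    omega
  obtain ⟨front, b, lastb, hbs, hfront, hb, hlast⟩ := good_split_two P _ hg (by omega)
  have hfne : front ≠ [] := by
    intro h
    rw [hbs, h] at hcount
    simp at hcount
  have hstl : P.stlBlock l = b := stlBlock_eq P l front b lastb hbs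
  have hZ : P.Z l = b.sum := by rw [PLRS.Z, hstl]
  have hZlt : P.Z l < P.size := by rw [hZ]; exact type2_sum_lt P b hb
  obtain ⟨s, hs1, hsL, aa, ha, hbeq⟩ := hb
  have hbeq' : b = blockC P s aa := hbeq
  have hells : P.ell (P.Z l) = s := by
    rw [hZ, hbeq', sum_blockC]
    exact ell_eq P s aa hs1 hsL ha
  have hblen : b.length = s := by rw [hbeq']; exact length_blockC P s aa hs1
  have hbt2 : P.IsType2Block b := ⟨s, hs1, hsL, aa, ha, hbeq⟩
  have hrem : P.removeSTL l = (front ++ [lastb]).flatten := removeSTL_eq P l front b lastb hbs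
  have hgoodrem : Good P (front ++ [lastb]) := ⟨front, lastb, rfl, hfront, hlast⟩
  have hflold : (front ++ [b, lastb]).flatten = l := by rw [← hbs]; exact hfl
  refine ⟨hZlt, ?_, ?_, ?_, by omega, by omega, ?_, ?_⟩
  · rw [hrem]; exact (legal_iff_good P _).2 ⟨_, hgoodrem, rfl⟩
  · rw [hrem, ← hflold]
    obtain ⟨f0, fr, rfl⟩ := List.exists_cons_of_ne_nil hfne
    have hf0 : P.IsType2Block f0 := hfront f0 (by simp)
    rw [List.cons_append, List.cons_append,
      headI_flatten_cons f0 (type2_ne_nil P f0 hf0), headI_flatten_cons f0 (type2_ne_nil P f0 hf0)]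
  · rw [hells, hrem]
    rw [← hflold, List.length_flatten, List.length_flatten]
    simp only [List.map_append, List.sum_append, List.map_cons, List.sum_cons]
    omega
  · rw [hZ, hrem]
    rw [← hflold, List.sum_flatten, List.sum_flatten]
    simp only [List.map_append, List.sum_append, List.map_cons, List.sum_cons]
    omega
  · rw [hrem]
    rw [insertSTL_eq P (P.Z l) _ front lastb (blocks_flatten P _ hgoodrem)]
    have : P.type2Block (P.Z l) = b := by
      rw [hZ]
      exact (type2Block_sum_eq P b hbt2).symm
    rw [this, hflold]

/-! ### summation identities over Omega -/

lemma finsum_mem_const (s : Set (List ℕ)) (hs : s.Finite) (r : ℝ) :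
    ∑ᶠ l ∈ s, r = (s.ncard : ℝ) * r := by
  rw [← Set.Finite.coe_toFinset hs, finsum_mem_coe_finset, Finset.sum_const, nsmul_eq_mul,
    Set.ncard_coe_finset]

lemma omega_finite (hnd : 2 ≤ P.L ∨ 2 ≤ P.c 1) (n : ℕ) (hn : 1 ≤ n) : (P.Omega n).Finite := by
  rw [omega_eq P hnd n hn]; exact legal_length_finite P n

lemma bijOn_remove (hnd : 2 ≤ P.L ∨ 2 ≤ P.c 1) (n t : ℕ) (hn : 2 * P.L < n) (ht : t < P.size) :
    Set.BijOn P.removeSTL (P.Omega n ∩ {l | P.Z l = t}) (P.Omega (n - P.ell t)) := by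
  have hL := P.L_pos
  have he1 : 1 ≤ P.ell t := (ell_spec P t ht).1
  have he2 : P.ell t ≤ P.L := (ell_spec P t ht).2.1
  have hOn := omega_eq P hnd n (by omega)
  have hOm := omega_eq P hnd (n - P.ell t) (by omega)
  refine ⟨?_, ?_, ?_⟩
  · rintro l ⟨hlO, hZt⟩
    rw [hOn] at hlO
    obtain ⟨⟨hleg, hhead⟩, hlen⟩ := hlO
    obtain ⟨-, hleg', hhead', hlen', -, -, -, -⟩ := remove_props P l hleg (by omega)
    rw [hOm]
    simp only [Set.mem_setOf_eq] at hZt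
    refine ⟨⟨hleg', by rw [hhead']; exact hhead⟩, ?_⟩
    rw [hlen', hlen, hZt]
  · rintro l1 ⟨h1O, h1Z⟩ l2 ⟨h2O, h2Z⟩ heq
    rw [hOn] at h1O h2O
    simp only [Set.mem_setOf_eq] at h1Z h2Z
    obtain ⟨-, -, -, -, -, -, -, hins1⟩ := remove_props P l1 h1O.1.1 (by rw [h1O.2]; omega)
    obtain ⟨-, -, -, -, -, -, -, hins2⟩ := remove_props P l2 h2O.1.1 (by rw [h2O.2]; omega)
    calc l1 = P.insertSTL (P.Z l1) (P.removeSTL l1) := hins1.symm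
    _ = P.insertSTL (P.Z l2) (P.removeSTL l2) := by rw [h1Z, heq, h2Z]
    _ = l2 := hins2
  · rintro l' hl'
    rw [hOm] at hl'
    obtain ⟨⟨hleg', hhead'⟩, hlen'⟩ := hl'
    obtain ⟨hleg2, hhead2, hlen2, hZ2, -, hrem2⟩ :=
      insert_props P t ht l' hleg' (by rw [hlen']; omega)
    refine ⟨P.insertSTL t l', ⟨?_, hZ2⟩, hrem2⟩
    rw [hOn]
    exact ⟨⟨hleg2, by rw [hhead2]; exact hhead'⟩, by rw [hlen2, hlen']; omega⟩

lemma sum_partition (hnd : 2 ≤ P.L ∨ 2 ≤ P.c 1) (n : ℕ) (hn : 2 * P.L < n) (g : List ℕ → ℝ) :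
    ∑ᶠ l ∈ P.Omega n, g l
      = ∑ t ∈ Finset.range P.size, ∑ᶠ l' ∈ P.Omega (n - P.ell t), g (P.insertSTL t l') := by
  classical
  have hL := P.L_pos
  have hfin := omega_finite P hnd n (by omega)
  have hOn := omega_eq P hnd n (by omega)
  rw [← Set.Finite.coe_toFinset hfin, finsum_mem_coe_finset]
  rw [← Finset.sum_fiberwise_of_maps_to (g := P.Z) (t := Finset.range P.size) ?hmaps g]
  case hmaps =>
    intro l hl
    rw [Set.Finite.mem_toFinset, hOn] at hl
    obtain ⟨⟨hleg, hhead⟩, hlen⟩ := hl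
    have := (remove_props P l hleg (by omega)).1
    simpa using this
  apply Finset.sum_congr rfl
  intro t htmem
  rw [Finset.mem_range] at htmem
  have hset : ↑(hfin.toFinset.filter (fun l => P.Z l = t)) = P.Omega n ∩ {l | P.Z l = t} := by
    ext l
    simp [Set.Finite.mem_toFinset]
  rw [← finsum_mem_coe_finset, hset]
  apply finsum_mem_eq_of_bijOn P.removeSTL (bijOn_remove P hnd n t hn htmem)
  rintro l ⟨hlO, hZt⟩
  rw [hOn] at hlO
  simp only [Set.mem_setOf_eq] at hZt
  obtain ⟨-, -, -, -, -, -, -, hins⟩ := remove_props P l hlO.1.1 (by rw [hlO.2]; omega)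
  conv_lhs => rw [← hins]
  rw [hZt]

lemma sum_K_eq_ncard_mul (hnd : 2 ≤ P.L ∨ 2 ≤ P.c 1) (m : ℕ) (hm : 1 ≤ m) :
    ∑ᶠ l ∈ P.Omega m, ((l.sum : ℕ) : ℝ) = ((P.Omega m).ncard : ℝ) * P.expectK m := by
  have hfin := omega_finite P hnd m hm
  rcases eq_or_ne (P.Omega m).ncard 0 with h0 | h0
  · have hempty : P.Omega m = ∅ := (Set.ncard_eq_zero hfin).1 h0
    rw [hempty]
    simp
  · rw [PLRS.expectK, PLRS.expect, PLRS.expectOn]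
    field_simp

lemma sum_Y_eq (hnd : 2 ≤ P.L ∨ 2 ≤ P.c 1) (a b : ℝ) (f : ℕ → ℝ)
    (hf : ∀ r : ℕ, P.L < r → P.expectK r = a * (r : ℝ) + b + f r)
    (n : ℕ) (hn : 2 * P.L < n) :
    ∑ᶠ l ∈ P.Omega n, ((P.Z l : ℝ) + f (n - P.Lfn l) - a * (P.Lfn l : ℝ))
      = ((P.Omega n).ncard : ℝ) * f n := by
  have hL := P.L_pos
  have hY := sum_partition P hnd n hn
    (fun l => ((P.Z l : ℝ) + f (n - P.Lfn l) - a * (P.Lfn l : ℝ)))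
  have hK := sum_partition P hnd n hn (fun l => ((l.sum : ℕ) : ℝ))
  have hone := sum_partition P hnd n hn (fun _ => (1 : ℝ))
  have hmt : ∀ t, t < P.size → 1 ≤ P.ell t ∧ P.ell t ≤ P.L :=
    fun t ht => ⟨(ell_spec P t ht).1, (ell_spec P t ht).2.1⟩
  have hfinm : ∀ t, t < P.size → (P.Omega (n - P.ell t)).Finite := by
    intro t ht
    exact omega_finite P hnd _ (by have := (hmt t ht).2; omega)
  -- inner rewrites
  have hinner_Y : ∀ t ∈ Finset.range P.size,
      (∑ᶠ l' ∈ P.Omega (n - P.ell t),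
        ((P.Z (P.insertSTL t l') : ℝ) + f (n - P.Lfn (P.insertSTL t l'))
          - a * (P.Lfn (P.insertSTL t l') : ℝ)))
      = ((P.Omega (n - P.ell t)).ncard : ℝ) * ((t:ℝ) + f (n - P.ell t) - a * (P.ell t : ℝ)) := by
    intro t htm
    rw [Finset.mem_range] at htm
    rw [finsum_mem_congr rfl (g := fun _ => ((t:ℝ) + f (n - P.ell t) - a * (P.ell t : ℝ))) ?hcg]
    · exact finsum_mem_const _ (hfinm t htm) _
    case hcg =>
      intro l' hl'
      rw [omega_eq P hnd _ (by have := (hmt t htm).2; omega)] at hl'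
      obtain ⟨⟨hleg', hhead'⟩, hlen'⟩ := hl'
      obtain ⟨-, -, -, hZ2, -, -⟩ := insert_props P t htm l' hleg'
        (by rw [hlen']; have h2 := (hmt t htm).2; omega)
      have hLfn : P.Lfn (P.insertSTL t l') = P.ell t := by rw [PLRS.Lfn, hZ2]
      rw [hZ2, hLfn]
  have hinner_K : ∀ t ∈ Finset.range P.size,
      (∑ᶠ l' ∈ P.Omega (n - P.ell t), (((P.insertSTL t l').sum : ℕ) : ℝ))
      = ((P.Omega (n - P.ell t)).ncard : ℝ)
          * ((a * ((n : ℝ) - (P.ell t : ℝ)) + b + f (n - P.ell t)) + (t:ℝ)) := by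
    intro t htm
    rw [Finset.mem_range] at htm
    rw [finsum_mem_congr rfl (g := fun l' => ((l'.sum : ℕ) : ℝ) + (t:ℝ)) ?hcg]
    · rw [finsum_mem_add_distrib (hfinm t htm), finsum_mem_const _ (hfinm t htm),
        sum_K_eq_ncard_mul P hnd _ (by have := (hmt t htm).2; omega)]
      rw [hf (n - P.ell t) (by have := (hmt t htm).2; omega)]
      have hcast : ((n - P.ell t : ℕ) : ℝ) = (n : ℝ) - (P.ell t : ℝ) := by
        have := (hmt t htm).2
        push_cast [Nat.cast_sub (by omega : P.ell t ≤ n)]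
        ring
      rw [hcast]
      ring
    case hcg =>
      intro l' hl'
      rw [omega_eq P hnd _ (by have := (hmt t htm).2; omega)] at hl'
      obtain ⟨⟨hleg', hhead'⟩, hlen'⟩ := hl'
      obtain ⟨-, -, -, -, hsum2, -⟩ := insert_props P t htm l' hleg'
        (by rw [hlen']; have h2 := (hmt t htm).2; omega)
      rw [hsum2]
      push_cast
      ring
  have hinner_one : ∀ t ∈ Finset.range P.size,
      (∑ᶠ _l' ∈ P.Omega (n - P.ell t), (1:ℝ)) = ((P.Omega (n - P.ell t)).ncard : ℝ) := by
    intro t htm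
    rw [Finset.mem_range] at htm
    rw [finsum_mem_const _ (hfinm t htm), mul_one]
  rw [Finset.sum_congr rfl hinner_Y] at hY
  rw [Finset.sum_congr rfl hinner_K] at hK
  rw [Finset.sum_congr rfl hinner_one] at hone
  rw [sum_K_eq_ncard_mul P hnd n (by omega), hf n (by omega)] at hK
  rw [finsum_mem_const _ (omega_finite P hnd n (by omega)), mul_one] at hone
  -- now pure algebra
  rw [hY]
  have key : ∀ t ∈ Finset.range P.size,
      ((P.Omega (n - P.ell t)).ncard : ℝ) * ((t:ℝ) + f (n - P.ell t) - a * (P.ell t : ℝ))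
      = ((P.Omega (n - P.ell t)).ncard : ℝ)
          * ((a * ((n : ℝ) - (P.ell t : ℝ)) + b + f (n - P.ell t)) + (t:ℝ))
        - ((P.Omega (n - P.ell t)).ncard : ℝ) * (a * (n:ℝ) + b) := by
    intro t _
    ring
  rw [Finset.sum_congr rfl key, Finset.sum_sub_distrib, ← hK, ← Finset.sum_mul, ← hone]
  ring


/-! ### analytic helpers -/

lemma expectOn_empty (g : List ℕ → ℝ) : expectOn (∅ : Set (List ℕ)) g = 0 := by
  rw [PLRS.expectOn]
  simp

lemma expectOn_sub (s : Set (List ℕ)) (hs : s.Finite) (g1 g2 : List ℕ → ℝ) :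
    expectOn s (fun l => g1 l - g2 l) = expectOn s g1 - expectOn s g2 := by
  rw [PLRS.expectOn, PLRS.expectOn, PLRS.expectOn, ← sub_div]
  congr 1
  exact finsum_mem_sub_distrib g1 g2 hs

lemma expectOn_abs_le (s : Set (List ℕ)) (hs : s.Finite) (g : List ℕ → ℝ) (B : ℝ)
    (hB : 0 ≤ B) (h : ∀ l ∈ s, |g l| ≤ B) : |expectOn s g| ≤ B := by
  rw [PLRS.expectOn]
  rcases eq_or_ne s.ncard 0 with h0 | h0
  · rw [h0]
    simpa using hB
  · have hpos : (0:ℝ) < (s.ncard : ℝ) := by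
      have : 0 < s.ncard := Nat.pos_of_ne_zero h0
      exact_mod_cast this
    rw [abs_div, abs_of_nonneg (le_of_lt hpos), div_le_iff₀ hpos]
    rw [← Set.Finite.coe_toFinset hs, finsum_mem_coe_finset, Set.ncard_coe_finset]
    calc |∑ l ∈ hs.toFinset, g l| ≤ ∑ l ∈ hs.toFinset, |g l| :=
          Finset.abs_sum_le_sum_abs _ _
      _ ≤ ∑ _l ∈ hs.toFinset, B := by
          apply Finset.sum_le_sum
          intro l hl
          exact h l ((Set.Finite.mem_toFinset hs).1 hl)
      _ = hs.toFinset.card * B := by rw [Finset.sum_const, nsmul_eq_mul]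
      _ = B * hs.toFinset.card := mul_comm _ _

lemma H_one_deg (hdeg : P.L = 1 ∧ P.c 1 = 1) (m : ℕ) (hm : 1 ≤ m) : P.H m = 1 := by
  induction m with
  | zero => omega
  | succ k ih =>
    rcases Nat.eq_zero_or_pos k with rfl | hk
    · exact P.H_one
    · rw [P.H_rec k (by omega)]
      rw [hdeg.1]
      simp only [Finset.Icc_self, Finset.sum_singleton]
      have h1 : k + 1 - 1 = k := by omega
      rw [h1, hdeg.2, one_mul]
      exact ih hk

lemma omega_empty_deg (hdeg : P.L = 1 ∧ P.c 1 = 1) (n : ℕ) (hn : 1 ≤ n) :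
    P.Omega n = ∅ := by
  ext l
  simp only [Set.mem_empty_iff_false, iff_false]
  rintro ⟨-, hlo, hhi⟩
  rw [H_one_deg P hdeg n hn, H_one_deg P hdeg (n+1) (by omega)] at *
  omega

/-- pointwise bounds on `Z` and `Lfn` over `Omega n` -/
lemma Z_Lfn_bounds (hnd : 2 ≤ P.L ∨ 2 ≤ P.c 1) (n : ℕ) (hn : 2 * P.L < n) (l : List ℕ)
    (hl : l ∈ P.Omega n) : P.Z l ≤ P.size ∧ P.Lfn l ≤ P.L := by
  rw [omega_eq P hnd n (by have := P.L_pos; omega)] at hl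
  obtain ⟨⟨hleg, -⟩, hlen⟩ := hl
  obtain ⟨hZlt, -, -, -, hell, -, -, -⟩ := remove_props P l hleg (by omega)
  exact ⟨le_of_lt hZlt, hell⟩

end PLRSAux

open PLRSAux

/-- If `E[K_r] = a·r + b + f r` for `r > L` with `f → 0`, then
`Var[Y_n] - E[(Z_n - a·L_n)²] → 0` as `n → ∞`, where
`Y_n ω = Z_n ω + f(n - L_n ω) - a·L_n ω`. -/
theorem var_Y_sub_expect_sq_tendsto (P : PLRS) (a b : ℝ) (f : ℕ → ℝ)
    (hf : ∀ r : ℕ, P.L < r → P.expectK r = a * (r : ℝ) + b + f r)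
    (hf0 : Filter.Tendsto f Filter.atTop (nhds 0)) :
    Filter.Tendsto (fun n : ℕ =>
        varOn (P.Omega n) (fun l => (P.Z l : ℝ) + f (n - P.Lfn l) - a * (P.Lfn l : ℝ)) -
          P.expect n (fun l => ((P.Z l : ℝ) - a * (P.Lfn l : ℝ)) ^ 2))
      Filter.atTop (nhds 0) := by
  classical
  by_cases hnd : 2 ≤ P.L ∨ 2 ≤ P.c 1
  · -- nondegenerate case
    rw [Metric.tendsto_atTop]
    intro ε hε
    set C : ℝ := (P.size : ℝ) + |a| * (P.L : ℝ) with hCdef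
    have hC0 : (0:ℝ) ≤ C := by positivity
    have h3pos : (0:ℝ) < 2*C + 3 := by linarith
    set δ : ℝ := min 1 (ε / (2*C + 3)) with hδdef
    have hδpos : 0 < δ := lt_min one_pos (div_pos hε h3pos)
    have hδ1 : δ ≤ 1 := min_le_left _ _
    have hδ3 : δ * (2*C + 3) ≤ ε := by
      have h := min_le_right 1 (ε / (2*C+3))
      calc δ * (2*C+3) ≤ (ε / (2*C+3)) * (2*C+3) := by nlinarith
      _ = ε := by field_simp
    obtain ⟨M, hM⟩ := Metric.tendsto_atTop.1 hf0 δ hδpos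
    have hM' : ∀ r, M ≤ r → |f r| < δ := by
      intro r hr
      have := hM r hr
      rwa [Real.dist_eq, sub_zero] at this
    refine ⟨max (M + P.L + 1) (2 * P.L + 1), ?_⟩
    intro n hn
    have hn2L : 2 * P.L < n := by
      have := le_max_right (M + P.L + 1) (2*P.L + 1)
      omega
    have hnM : M + P.L + 1 ≤ n := le_trans (le_max_left _ _) hn
    rw [Real.dist_eq, sub_zero]
    have hL := P.L_pos
    have hfin := omega_finite P hnd n (by omega)
    rcases eq_or_ne (P.Omega n).ncard 0 with h0 | h0
    · have hempty : P.Omega n = ∅ := (Set.ncard_eq_zero hfin).1 h0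
      simp only [PLRS.varOn, PLRS.expect, hempty, expectOn_empty]
      simpa using hε
    · have hEY : expectOn (P.Omega n)
          (fun l => (P.Z l : ℝ) + f (n - P.Lfn l) - a * (P.Lfn l : ℝ)) = f n := by
        rw [PLRS.expectOn, sum_Y_eq P hnd a b f hf n hn2L]
        field_simp
      have hsub : expectOn (P.Omega n)
            (fun l => ((P.Z l : ℝ) + f (n - P.Lfn l) - a * (P.Lfn l : ℝ)) ^ 2
              - ((P.Z l : ℝ) - a * (P.Lfn l : ℝ)) ^ 2)
          = expectOn (P.Omega n)
              (fun l => ((P.Z l : ℝ) + f (n - P.Lfn l) - a * (P.Lfn l : ℝ)) ^ 2)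
            - expectOn (P.Omega n) (fun l => ((P.Z l : ℝ) - a * (P.Lfn l : ℝ)) ^ 2) :=
        expectOn_sub _ hfin _ _
      have hbound : ∀ l ∈ P.Omega n,
          |((P.Z l : ℝ) + f (n - P.Lfn l) - a * (P.Lfn l : ℝ)) ^ 2
            - ((P.Z l : ℝ) - a * (P.Lfn l : ℝ)) ^ 2| ≤ δ * (2*C + δ) := by
        intro l hl
        obtain ⟨hZle, hLle⟩ := Z_Lfn_bounds P hnd n hn2L l hl
        have hWb : |(P.Z l : ℝ) - a * (P.Lfn l : ℝ)| ≤ C := by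
          calc |(P.Z l : ℝ) - a * (P.Lfn l : ℝ)|
              ≤ |(P.Z l : ℝ)| + |a * (P.Lfn l : ℝ)| := abs_sub _ _
            _ ≤ (P.size : ℝ) + |a| * (P.L : ℝ) := by
                rw [abs_mul]
                have h1 : |(P.Z l : ℝ)| = (P.Z l : ℝ) := abs_of_nonneg (by positivity)
                have h2 : |(P.Lfn l : ℝ)| = (P.Lfn l : ℝ) := abs_of_nonneg (by positivity)
                rw [h1, h2]
                have h3 : (P.Z l : ℝ) ≤ (P.size : ℝ) := by exact_mod_cast hZle
                have h4 : (P.Lfn l : ℝ) ≤ (P.L : ℝ) := by exact_mod_cast hLle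
                have h5 : |a| * (P.Lfn l : ℝ) ≤ |a| * (P.L : ℝ) :=
                  mul_le_mul_of_nonneg_left h4 (abs_nonneg a)
                linarith
            _ = C := hCdef.symm
        have hgb : |f (n - P.Lfn l)| ≤ δ := le_of_lt (hM' _ (by omega))
        have key : ((P.Z l : ℝ) + f (n - P.Lfn l) - a * (P.Lfn l : ℝ)) ^ 2
              - ((P.Z l : ℝ) - a * (P.Lfn l : ℝ)) ^ 2
            = f (n - P.Lfn l)
              * (2 * ((P.Z l : ℝ) - a * (P.Lfn l : ℝ)) + f (n - P.Lfn l)) := by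
          ring
        rw [key, abs_mul]
        have h2 : |2 * ((P.Z l : ℝ) - a * (P.Lfn l : ℝ)) + f (n - P.Lfn l)| ≤ 2*C + δ := by
          calc |2 * ((P.Z l : ℝ) - a * (P.Lfn l : ℝ)) + f (n - P.Lfn l)|
              ≤ |2 * ((P.Z l : ℝ) - a * (P.Lfn l : ℝ))| + |f (n - P.Lfn l)| := abs_add_le _ _
            _ ≤ 2*C + δ := by
                rw [abs_mul]
                have : |(2:ℝ)| = 2 := by norm_num
                rw [this]
                linarith
        exact mul_le_mul hgb h2 (abs_nonneg _) (le_of_lt hδpos)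
      have hEbound : |expectOn (P.Omega n)
          (fun l => ((P.Z l : ℝ) + f (n - P.Lfn l) - a * (P.Lfn l : ℝ)) ^ 2
            - ((P.Z l : ℝ) - a * (P.Lfn l : ℝ)) ^ 2)| ≤ δ * (2*C + δ) :=
        expectOn_abs_le _ hfin _ _ (by positivity) hbound
      have hfn : |f n| ≤ δ := le_of_lt (hM' n (by omega))
      have hD : varOn (P.Omega n)
            (fun l => (P.Z l : ℝ) + f (n - P.Lfn l) - a * (P.Lfn l : ℝ)) -
          P.expect n (fun l => ((P.Z l : ℝ) - a * (P.Lfn l : ℝ)) ^ 2)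
          = expectOn (P.Omega n)
              (fun l => ((P.Z l : ℝ) + f (n - P.Lfn l) - a * (P.Lfn l : ℝ)) ^ 2
                - ((P.Z l : ℝ) - a * (P.Lfn l : ℝ)) ^ 2) - (f n)^2 := by
        rw [PLRS.varOn, PLRS.expect, hsub, hEY]
        ring
      rw [hD]
      have h1 : |(f n)^2| ≤ δ^2 := by
        rw [abs_of_nonneg (sq_nonneg (f n))]
        calc (f n)^2 = |f n|^2 := (sq_abs (f n)).symm
        _ ≤ δ^2 := pow_le_pow_left₀ (abs_nonneg _) hfn 2
      apply lt_of_le_of_lt (le_trans (abs_sub _ _) (add_le_add hEbound h1))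
      nlinarith [mul_nonneg (le_of_lt hδpos) (sub_nonneg.2 hδ1)]
  · -- degenerate case
    have hL := P.L_pos
    have hc := P.c1_pos
    push_neg at hnd
    have hdeg : P.L = 1 ∧ P.c 1 = 1 := by omega
    apply Filter.Tendsto.congr' _ tendsto_const_nhds
    filter_upwards [Filter.eventually_ge_atTop 1] with n hn
    simp [PLRS.varOn, PLRS.expect, expectOn_empty, omega_empty_deg P hdeg n hn]
end
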